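/- arXiv:2209.00124 — 4 statements merged into one kernel-verified Lean document; each statement's English description precedes it below -/
import Mathlib

section
/- Let (S_n)_{n≥1} be a sequence of bounded linear test-statistics on a separable real Hilbert space H. Let (λ_i)_{i≥1} be positive constants, (φ_i)_{i≥1} an orthonormal basis of H, (Z_i)_{i≥1} i.i.d. standard normal random variables, and define S(·) = ∑_{i≥1} √λ_i Z_i ⟨φ_i, ·⟩; suppose the partial sums of S converge almost surely in the dual H* (with the operator norm). If S_n converges in distribution to S, then Conditions (G0), (G1) and (G2) hold, with σ(ω,ω') = ∑_{i≥1} λ_i ⟨φ_i,ω⟩⟨φ_i,ω'⟩. -/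
open MeasureTheory ProbabilityTheory Filter Topology
open scoped ENNReal NNReal InnerProductSpace BoundedContinuousFunction

open MeasureTheory ProbabilityTheory Filter Topology Real
open scoped ENNReal NNReal InnerProductSpace BoundedContinuousFunction


namespace GaussAux

lemma pdf_conv_real {a b : ℝ≥0} (ha : a ≠ 0) (hb : b ≠ 0) (y : ℝ) :
    ∫ x, gaussianPDFReal 0 a x * gaussianPDFReal x b y
      = gaussianPDFReal 0 (a + b) y := by
  have hA : (0:ℝ) < a := lt_of_le_of_ne (by positivity) (by exact_mod_cast (Ne.symm ha))
  have hB : (0:ℝ) < b := lt_of_le_of_ne (by positivity) (by exact_mod_cast (Ne.symm hb))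
  have hA' : (a:ℝ) ≠ 0 := ne_of_gt hA
  have hB' : (b:ℝ) ≠ 0 := ne_of_gt hB
  have hAB : (0:ℝ) < (a:ℝ) + b := by positivity
  have hAB' : (a:ℝ) + b ≠ 0 := ne_of_gt hAB
  have hBA' : (b:ℝ) + a ≠ 0 := by rw [add_comm]; exact hAB'
  set k := ((a:ℝ) + b) / (2 * a * b) with hk_def
  have hk : 0 < k := by positivity
  set d := (a:ℝ) * y / ((a:ℝ) + b) with hd_def
  set c := (√(2 * π * a))⁻¹ * (√(2 * π * b))⁻¹ * rexp (-(y - 0) ^ 2 / (2 * ((a:ℝ) + b)))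
    with hc_def
  have key : ∀ x, gaussianPDFReal 0 a x * gaussianPDFReal x b y
      = c * rexp (-k * (x - d) ^ 2) := by
    intro x
    simp only [gaussianPDFReal, hc_def]
    rw [mul_mul_mul_comm, mul_assoc ((√(2 * π * (a:ℝ)))⁻¹ * (√(2 * π * (b:ℝ)))⁻¹),
      ← Real.exp_add, ← Real.exp_add]
    congr 1
    rw [hk_def, hd_def]
    congr 1
    field_simp
    ring
  simp_rw [key]
  rw [integral_const_mul]
  have : (∫ x, rexp (-k * (x - d) ^ 2)) = ∫ x, rexp (-k * x ^ 2) :=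
    integral_sub_right_eq_self (fun x => rexp (-k * x ^ 2)) d
  rw [this, integral_gaussian]
  have hconst : √(π / k) * ((√(2 * π * (a:ℝ)))⁻¹ * (√(2 * π * (b:ℝ)))⁻¹)
      = (√(2 * π * ((a:ℝ) + b)))⁻¹ := by
    rw [← Real.sqrt_inv (2 * π * (a:ℝ)), ← Real.sqrt_inv (2 * π * (b:ℝ)),
      ← Real.sqrt_inv (2 * π * ((a:ℝ) + b)),
      ← Real.sqrt_mul (by positivity : (0:ℝ) ≤ (2 * π * (a:ℝ))⁻¹),
      ← Real.sqrt_mul (by positivity : (0:ℝ) ≤ π / k)]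
    congr 1
    have hpi : π ≠ 0 := ne_of_gt Real.pi_pos
    field_simp [hk_def]
    rw [hk_def]; field_simp
  have hab : ((a + b : ℝ≥0) : ℝ) = (a:ℝ) + b := by push_cast; rfl
  simp only [gaussianPDFReal, hc_def, hab]
  linear_combination rexp (-(y - 0) ^ 2 / (2 * ((a:ℝ) + b))) * hconst

end GaussAux

namespace GaussAux
open scoped ENNReal NNReal
open MeasureTheory ProbabilityTheory Real

lemma integrable_pdf_mul {a b : ℝ≥0} (ha : a ≠ 0) (hb : b ≠ 0) (y : ℝ) :
    Integrable (fun x => gaussianPDFReal 0 a x * gaussianPDFReal x b y) := by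
  have h1 : Integrable (fun x => gaussianPDFReal x b y * gaussianPDFReal 0 a x) := by
    refine (integrable_gaussianPDFReal 0 a).bdd_mul (c := (√(2 * π * b))⁻¹) ?_ ?_
    · apply Measurable.aestronglyMeasurable
      unfold gaussianPDFReal
      fun_prop
    · refine ae_of_all _ fun x => ?_
      rw [Real.norm_eq_abs, abs_of_nonneg (gaussianPDFReal_nonneg _ _ _)]
      unfold gaussianPDFReal
      have : rexp (-(y - x) ^ 2 / (2 * b)) ≤ 1 := by
        rw [Real.exp_le_one_iff]
        exact div_nonpos_of_nonpos_of_nonneg (neg_nonpos.mpr (sq_nonneg _)) (by positivity)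
      calc (√(2 * π * b))⁻¹ * rexp (-(y - x) ^ 2 / (2 * b))
          ≤ (√(2 * π * b))⁻¹ * 1 := by gcongr
        _ = (√(2 * π * b))⁻¹ := mul_one _
  simpa [mul_comm] using h1

lemma pdf_conv {a b : ℝ≥0} (ha : a ≠ 0) (hb : b ≠ 0) (y : ℝ) :
    ∫⁻ x, gaussianPDF 0 a x * gaussianPDF x b y = gaussianPDF 0 (a + b) y := by
  simp only [gaussianPDF]
  simp_rw [← ENNReal.ofReal_mul (gaussianPDFReal_nonneg 0 a _)]
  rw [← ofReal_integral_eq_lintegral_ofReal (integrable_pdf_mul ha hb y)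
    (ae_of_all _ fun x => mul_nonneg (gaussianPDFReal_nonneg _ _ _)
      (gaussianPDFReal_nonneg _ _ _)), pdf_conv_real ha hb y]

lemma measurable_pdf_uncurry (b : ℝ≥0) :
    Measurable (Function.uncurry fun x y => gaussianPDF x b y) := by
  unfold gaussianPDF gaussianPDFReal
  apply Measurable.ennreal_ofReal
  fun_prop

lemma map_add_gaussian (a b : ℝ≥0) :
    Measure.map (fun p : ℝ × ℝ => p.1 + p.2) ((gaussianReal 0 a).prod (gaussianReal 0 b))
      = gaussianReal 0 (a + b) := by
  by_cases ha : a = 0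
  · subst ha
    rw [gaussianReal_zero_var, Measure.dirac_prod,
      Measure.map_map measurable_add measurable_prodMk_left]
    have : ((fun p : ℝ × ℝ => p.1 + p.2) ∘ Prod.mk (0:ℝ)) = fun y : ℝ => y := by
      funext y; simp
    rw [this, Measure.map_id', zero_add]
  by_cases hb : b = 0
  · subst hb
    rw [gaussianReal_zero_var, Measure.prod_dirac,
      Measure.map_map measurable_add (measurable_prodMk_right)]
    have : ((fun p : ℝ × ℝ => p.1 + p.2) ∘ (fun x : ℝ => (x, (0:ℝ)))) = fun x : ℝ => x := by
      funext x; simp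
    rw [this, Measure.map_id', add_zero]
  have hab : a + b ≠ 0 := fun h => ha (add_eq_zero.mp h).1
  ext s hs
  rw [Measure.map_apply measurable_add hs, Measure.prod_apply (measurable_add hs)]
  have step1 : ∀ x : ℝ, gaussianReal 0 b (Prod.mk x ⁻¹' ((fun p : ℝ × ℝ => p.1 + p.2) ⁻¹' s))
      = ∫⁻ y in s, gaussianPDF x b y := by
    intro x
    have : (Prod.mk x ⁻¹' ((fun p : ℝ × ℝ => p.1 + p.2) ⁻¹' s)) = (fun y => x + y) ⁻¹' s := rfl
    rw [this, ← Measure.map_apply (measurable_const_add x) hs, gaussianReal_map_const_add,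
      zero_add, gaussianReal_apply _ hb s]
  simp_rw [step1]
  rw [gaussianReal_of_var_ne_zero 0 ha]
  have hFmeas : Measurable fun x => ∫⁻ y in s, gaussianPDF x b y :=
    Measurable.lintegral_prod_right (measurable_pdf_uncurry b)
  rw [lintegral_withDensity_eq_lintegral_mul _ (measurable_gaussianPDF 0 a) hFmeas]
  have step2 : ∀ x : ℝ, gaussianPDF 0 a x * ∫⁻ y in s, gaussianPDF x b y
      = ∫⁻ y in s, gaussianPDF 0 a x * gaussianPDF x b y := by
    intro x
    have hm : Measurable fun y => gaussianPDF x b y := by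
      unfold gaussianPDF gaussianPDFReal
      apply Measurable.ennreal_ofReal
      fun_prop
    rw [lintegral_const_mul _ hm]
  simp only [Pi.mul_apply]
  simp_rw [step2]
  rw [lintegral_lintegral_swap]
  · simp_rw [pdf_conv ha hb]
    rw [gaussianReal_apply _ hab s]
  · apply Measurable.aemeasurable
    exact ((measurable_gaussianPDF 0 a).comp measurable_fst).mul (measurable_pdf_uncurry b)

end GaussAux

namespace GaussAux


variable {Ω' : Type*} [MeasurableSpace Ω'] {P' : Measure Ω'} [IsProbabilityMeasure P']

lemma indepFun_add_gaussian {X Y : Ω' → ℝ} (hX : Measurable X) (hY : Measurable Y)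
    (hXY : IndepFun X Y P') {a b : ℝ≥0}
    (ha : Measure.map X P' = gaussianReal 0 a) (hb : Measure.map Y P' = gaussianReal 0 b) :
    Measure.map (fun ω => X ω + Y ω) P' = gaussianReal 0 (a + b) := by
  have hprod : Measure.map (fun ω => (X ω, Y ω)) P' = (gaussianReal 0 a).prod (gaussianReal 0 b) := by
    rw [← ha, ← hb]
    exact (indepFun_iff_map_prod_eq_prod_map_map hX.aemeasurable hY.aemeasurable).mp hXY
  have : (fun ω => X ω + Y ω) = (fun p : ℝ × ℝ => p.1 + p.2) ∘ (fun ω => (X ω, Y ω)) := rfl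
  rw [this, ← Measure.map_map measurable_add (hX.prodMk hY), hprod, map_add_gaussian]

lemma map_sum_gaussian (Z : ℕ → Ω' → ℝ) (hZmeas : ∀ i, Measurable (Z i))
    (hZindep : iIndepFun Z P')
    (hZgauss : ∀ i, Measure.map (Z i) P' = gaussianReal 0 1) (c : ℕ → ℝ) (m : ℕ) :
    Measure.map (fun ω => ∑ i ∈ Finset.range m, c i * Z i ω) P'
      = gaussianReal 0 (∑ i ∈ Finset.range m, (NNReal.mk ((c i)^2) (sq_nonneg _))) := by
  induction m with
  | zero =>
      simp only [Finset.range_zero, Finset.sum_empty]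
      rw [show (fun _ : Ω' => (0:ℝ)) = fun _ => (0:ℝ) from rfl, Measure.map_const,
        measure_univ, one_smul, gaussianReal_zero_var]
  | succ m ih =>
      have hsum : (fun ω => ∑ i ∈ Finset.range (m+1), c i * Z i ω)
          = fun ω => (∑ i ∈ Finset.range m, c i * Z i ω) + c m * Z m ω := by
        funext ω; exact Finset.sum_range_succ _ m
      rw [hsum, Finset.sum_range_succ]
      have hmeas : ∀ i, Measurable fun ω => c i * Z i ω :=
        fun i => (hZmeas i).const_mul (c i)
      have hindep' : iIndepFun (fun i ω => c i * Z i ω) P' := by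
        have := hZindep.comp (fun i (x:ℝ) => c i * x) (fun i => measurable_const_mul (c i))
        exact this
      have hindep : IndepFun (fun ω => ∑ i ∈ Finset.range m, c i * Z i ω)
          (fun ω => c m * Z m ω) P' := by
        have := hindep'.indepFun_finsetSum_of_notMem hmeas
          (Finset.notMem_range_self (n := m))
        have heq : (∑ j ∈ Finset.range m, fun ω => c j * Z j ω)
            = fun ω => ∑ i ∈ Finset.range m, c i * Z i ω := by
          funext ω; simp [Finset.sum_apply]
        rwa [heq] at this
      have hcm : Measure.map (fun ω => c m * Z m ω) P'
          = gaussianReal 0 (NNReal.mk ((c m)^2) (sq_nonneg _)) := by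
        have : Measure.map (fun ω => c m * Z m ω) P'
            = Measure.map ((c m * ·)) (Measure.map (Z m) P') := by
          rw [Measure.map_map (measurable_const_mul (c m)) (hZmeas m)]
          rfl
        rw [this, hZgauss m, gaussianReal_map_const_mul]
        norm_num
      exact indepFun_add_gaussian (by fun_prop) ((hZmeas m).const_mul _) hindep ih hcm

end GaussAux

namespace GaussAux

variable {Ω' : Type*} [MeasurableSpace Ω'] {P' : Measure Ω'} [IsProbabilityMeasure P']

-- convexity bound : for y ∈ [0,1], exp (-y) ≤ 1 - (1 - exp (-1)) * y
lemma exp_neg_le_one_sub {y : ℝ} (h0 : 0 ≤ y) (h1 : y ≤ 1) :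
    rexp (-y) ≤ 1 - (1 - rexp (-1)) * y := by
  have h := convexOn_exp.2 (Set.mem_univ (0:ℝ)) (Set.mem_univ (-1:ℝ))
    (by linarith : (0:ℝ) ≤ 1 - y) h0 (by ring)
  simp only [smul_eq_mul, mul_zero, mul_neg_one, zero_add, Real.exp_zero, mul_one] at h
  linarith

lemma summable_of_ae_summable_sq (Z : ℕ → Ω' → ℝ) (hZmeas : ∀ i, Measurable (Z i))
    (hZindep : iIndepFun Z P')
    (hZgauss : ∀ i, Measure.map (Z i) P' = gaussianReal 0 1)
    (lam : ℕ → ℝ) (hlam : ∀ i, 0 < lam i)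
    (hsum : ∀ᵐ ω ∂P', Summable fun k => lam k * (Z k ω) ^ 2) :
    Summable lam := by
  classical
  set Y : ℕ → Ω' → ℝ := fun i ω => min (lam i * (Z i ω) ^ 2) 1 with hY_def
  have hY0 : ∀ i ω, 0 ≤ Y i ω := fun i ω => le_min (mul_nonneg (hlam i).le (sq_nonneg _)) zero_le_one
  have hY1 : ∀ i ω, Y i ω ≤ 1 := fun i ω => min_le_right _ _
  have hYmeas : ∀ i, Measurable (Y i) := fun i =>
    (((hZmeas i).pow_const 2).const_mul _).min measurable_const
  have hYindep : iIndepFun Y P' := by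
    have := hZindep.comp (fun i (x : ℝ) => min (lam i * x ^ 2) 1)
      (fun i => ((measurable_id.pow_const 2).const_mul _).min measurable_const)
    exact this
  have hYint : ∀ i, Integrable (Y i) P' := by
    intro i
    refine Integrable.mono' (integrable_const 1) (hYmeas i).aestronglyMeasurable ?_
    exact ae_of_all _ fun ω => by
      rw [Real.norm_eq_abs, abs_of_nonneg (hY0 i ω)]; exact hY1 i ω
  -- the constant c₀
  set c₀ : ℝ := ∫ x, min (x ^ 2) 1 ∂(gaussianReal 0 1) with hc₀_def
  have hmin_meas : Measurable fun x : ℝ => min (x ^ 2) 1 :=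
    (measurable_id.pow_const 2).min measurable_const
  have hmin_int : Integrable (fun x : ℝ => min (x ^ 2) 1) (gaussianReal 0 1) := by
    refine Integrable.mono' (integrable_const 1) hmin_meas.aestronglyMeasurable ?_
    exact ae_of_all _ fun x => by
      rw [Real.norm_eq_abs, abs_of_nonneg (le_min (sq_nonneg x) zero_le_one)]
      exact min_le_right _ _
  have hc₀pos : 0 < c₀ := by
    rw [hc₀_def, integral_pos_iff_support_of_nonneg
      (fun x => le_min (sq_nonneg x) zero_le_one) hmin_int]
    have hsub : ({(0:ℝ)}ᶜ : Set ℝ) ⊆ Function.support fun x => min (x ^ 2) 1 := by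
      intro x hx
      simp only [Set.mem_compl_iff, Set.mem_singleton_iff] at hx
      exact ne_of_gt (lt_min (by positivity) one_pos)
    refine lt_of_lt_of_le ?_ (measure_mono hsub)
    have h0 : gaussianReal 0 1 {(0:ℝ)} = 0 :=
      gaussianReal_absolutelyContinuous 0 one_ne_zero (measure_singleton 0)
    rw [measure_compl (measurableSet_singleton 0) (measure_ne_top _ _), h0]
    simp
  -- lower bound for E[Y i]
  have hEY : ∀ i, min (lam i) 1 * c₀ ≤ ∫ ω, Y i ω ∂P' := by
    intro i
    have hmap : ∫ ω, Y i ω ∂P' = ∫ x, min (lam i * x ^ 2) 1 ∂(gaussianReal 0 1) := by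
      rw [← hZgauss i, integral_map (hZmeas i).aemeasurable]
      exact (((measurable_id.pow_const 2).const_mul _).min
        measurable_const).aestronglyMeasurable
    rw [hmap]
    have hint2 : Integrable (fun x : ℝ => min (lam i * x ^ 2) 1) (gaussianReal 0 1) := by
      refine Integrable.mono' (integrable_const 1)
        (((measurable_id.pow_const 2).const_mul _).min measurable_const).aestronglyMeasurable ?_
      exact ae_of_all _ fun x => by
        rw [Real.norm_eq_abs, abs_of_nonneg (le_min (mul_nonneg (hlam i).le (sq_nonneg _)) zero_le_one)]
        exact min_le_right _ _
    have hpt : ∀ x : ℝ, min (lam i) 1 * min (x ^ 2) 1 ≤ min (lam i * x ^ 2) 1 := by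
      intro x
      refine le_min ?_ ?_
      · exact mul_le_mul (min_le_left _ _) (min_le_left _ _)
          (le_min (sq_nonneg x) zero_le_one) (le_of_lt (hlam i))
      · exact mul_le_one₀ (min_le_right _ _) (le_min (sq_nonneg x) zero_le_one)
          (min_le_right _ _)
    calc min (lam i) 1 * c₀ = ∫ x, min (lam i) 1 * min (x ^ 2) 1 ∂(gaussianReal 0 1) := by
          rw [integral_const_mul]
      _ ≤ ∫ x, min (lam i * x ^ 2) 1 ∂(gaussianReal 0 1) :=
          integral_mono (hmin_int.const_mul _) hint2 hpt
  -- upper bound for E[exp (-Y i)]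
  set c : ℝ := 1 - rexp (-1) with hc_def
  have hcpos : 0 < c := by
    rw [hc_def, sub_pos]
    exact Real.exp_lt_one_iff.mpr (by norm_num)
  have hexpint : ∀ i, Integrable (fun ω => rexp (-Y i ω)) P' := by
    intro i
    refine Integrable.mono' (integrable_const 1)
      ((hYmeas i).neg.exp.aestronglyMeasurable) ?_
    exact ae_of_all _ fun ω => by
      rw [Real.norm_eq_abs, abs_of_nonneg (Real.exp_nonneg _), Real.exp_le_one_iff]
      exact neg_nonpos.mpr (hY0 i ω)
  have hexp : ∀ i, ∫ ω, rexp (-Y i ω) ∂P' ≤ rexp (-(c * (min (lam i) 1 * c₀))) := by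
    intro i
    have h1 : ∫ ω, rexp (-Y i ω) ∂P' ≤ 1 - c * ∫ ω, Y i ω ∂P' := by
      have : ∫ ω, rexp (-Y i ω) ∂P' ≤ ∫ ω, 1 - c * Y i ω ∂P' :=
        integral_mono (hexpint i) ((integrable_const 1).sub ((hYint i).const_mul c))
          (fun ω => exp_neg_le_one_sub (hY0 i ω) (hY1 i ω))
      rwa [integral_sub (integrable_const 1) ((hYint i).const_mul c), integral_const,
        probReal_univ, smul_eq_mul, one_mul, integral_const_mul] at this
    calc ∫ ω, rexp (-Y i ω) ∂P' ≤ 1 - c * ∫ ω, Y i ω ∂P' := h1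
      _ ≤ 1 - c * (min (lam i) 1 * c₀) := by
          have := hEY i
          nlinarith
      _ ≤ rexp (-(c * (min (lam i) 1 * c₀))) := by
          have := Real.add_one_le_exp (-(c * (min (lam i) 1 * c₀)))
          linarith
  -- product formula via mgf
  have hprod : ∀ m, ∫ ω, rexp (-∑ i ∈ Finset.range m, Y i ω) ∂P'
      = ∏ i ∈ Finset.range m, ∫ ω, rexp (-Y i ω) ∂P' := by
    intro m
    have h := hYindep.mgf_sum hYmeas (Finset.range m) (t := -1)
    simp only [mgf, Finset.sum_apply, neg_one_mul] at h
    exact h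
  -- the a.s. total sum
  set Wen : Ω' → ℝ≥0∞ := fun ω => ∑' i, ENNReal.ofReal (Y i ω) with hWen_def
  have hWmeas : Measurable fun ω => (Wen ω).toReal :=
    (Measurable.ennreal_tsum fun i => (hYmeas i).ennreal_ofReal).ennreal_toReal
  have hWlb : ∀ᵐ ω ∂P', ∀ m, ∑ i ∈ Finset.range m, Y i ω ≤ (Wen ω).toReal := by
    filter_upwards [hsum] with ω hω
    have hYsum : Summable fun i => Y i ω :=
      Summable.of_nonneg_of_le (fun i => hY0 i ω) (fun i => min_le_left _ _) hω
    have hWeq : Wen ω = ENNReal.ofReal (∑' i, Y i ω) := by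
      rw [hWen_def, ENNReal.ofReal_tsum_of_nonneg (fun i => hY0 i ω) hYsum]
    intro m
    rw [hWeq, ENNReal.toReal_ofReal (tsum_nonneg fun i => hY0 i ω)]
    exact Summable.sum_le_tsum (Finset.range m) (fun i _ => hY0 i ω) hYsum
  set δ : ℝ := ∫ ω, rexp (-(Wen ω).toReal) ∂P' with hδ_def
  have hδint : Integrable (fun ω => rexp (-(Wen ω).toReal)) P' := by
    refine Integrable.mono' (integrable_const 1) hWmeas.neg.exp.aestronglyMeasurable ?_
    exact ae_of_all _ fun ω => by
      rw [Real.norm_eq_abs, abs_of_nonneg (Real.exp_nonneg _), Real.exp_le_one_iff]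
      exact neg_nonpos.mpr ENNReal.toReal_nonneg
  have hδpos : 0 < δ := by
    rw [hδ_def, integral_pos_iff_support_of_nonneg (fun ω => Real.exp_nonneg _) hδint]
    have : (Function.support fun ω => rexp (-(Wen ω).toReal)) = Set.univ :=
      Set.eq_univ_of_forall fun ω => ne_of_gt (Real.exp_pos _)
    rw [this]
    simp
  have hδle : ∀ m, δ ≤ ∫ ω, rexp (-∑ i ∈ Finset.range m, Y i ω) ∂P' := by
    intro m
    refine integral_mono_ae hδint ?_ ?_
    · refine Integrable.mono' (integrable_const 1) ?_ ?_
      · exact (Finset.measurable_sum (Finset.range m)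
          fun i _ => hYmeas i).neg.exp.aestronglyMeasurable
      · exact ae_of_all _ fun ω => by
          rw [Real.norm_eq_abs, abs_of_nonneg (Real.exp_nonneg _), Real.exp_le_one_iff]
          exact neg_nonpos.mpr (Finset.sum_nonneg fun i _ => hY0 i ω)
    · filter_upwards [hWlb] with ω h
      exact Real.exp_le_exp.mpr (neg_le_neg (h m))
  have hkey : ∀ m, ∑ i ∈ Finset.range m, c * (min (lam i) 1 * c₀) ≤ -Real.log δ := by
    intro m
    have h2 : δ ≤ rexp (∑ i ∈ Finset.range m, -(c * (min (lam i) 1 * c₀))) := by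
      rw [Real.exp_sum]
      calc δ ≤ ∫ ω, rexp (-∑ i ∈ Finset.range m, Y i ω) ∂P' := hδle m
        _ = ∏ i ∈ Finset.range m, ∫ ω, rexp (-Y i ω) ∂P' := hprod m
        _ ≤ ∏ i ∈ Finset.range m, rexp (-(c * (min (lam i) 1 * c₀))) :=
            Finset.prod_le_prod (fun i _ => integral_nonneg fun ω => Real.exp_nonneg _)
              (fun i _ => hexp i)
    have h3 := Real.log_le_log hδpos h2
    rw [Real.log_exp] at h3
    have h4 : ∑ i ∈ Finset.range m, -(c * (min (lam i) 1 * c₀))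
        = -∑ i ∈ Finset.range m, c * (min (lam i) 1 * c₀) := by
      rw [Finset.sum_neg_distrib]
    rw [h4] at h3
    linarith
  have hminnn : ∀ i, 0 ≤ min (lam i) 1 := fun i => le_min (hlam i).le zero_le_one
  have hs1 : Summable fun i => c * (min (lam i) 1 * c₀) :=
    summable_of_sum_range_le
      (fun i => mul_nonneg hcpos.le (mul_nonneg (hminnn i) hc₀pos.le)) hkey
  have h2 : Summable fun i => min (lam i) 1 := by
    have heq : (fun i => c * (min (lam i) 1 * c₀)) = fun i => (c * c₀) * min (lam i) 1 :=
      funext fun i => by ring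
    rw [heq] at hs1
    have hne : c * c₀ ≠ 0 := by positivity
    exact (summable_mul_left_iff hne).mp hs1
  have htend : Tendsto (fun i => min (lam i) 1) atTop (nhds 0) := h2.tendsto_atTop_zero
  have hev : ∀ᶠ i in atTop, min (lam i) 1 = lam i := by
    filter_upwards [htend.eventually_lt_const zero_lt_one] with i hi
    rcases le_total (lam i) 1 with h | h
    · exact min_eq_left h
    · rw [min_eq_right h] at hi ⊢
      linarith
  obtain ⟨N, hN⟩ := eventually_atTop.mp hev
  have h3 : Summable fun i => lam (i + N) :=
    ((summable_nat_add_iff N).mpr h2).congr fun i => hN (i + N) (le_add_self)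
  exact (summable_nat_add_iff N).mp h3

end GaussAux

namespace GaussAux

variable {H : Type*} [NormedAddCommGroup H] [InnerProductSpace ℝ H] [CompleteSpace H]

lemma vec_hasSum_sq (φ : HilbertBasis ℕ ℝ H) (v : H) :
    HasSum (fun i => ⟪(φ i : H), v⟫_ℝ ^ 2) (‖v‖ ^ 2) := by
  have h := φ.hasSum_inner_mul_inner v v
  rw [real_inner_self_eq_norm_sq] at h
  refine h.congr_fun fun i => ?_
  rw [real_inner_comm v (φ i), sq]

lemma dual_hasSum_sq (φ : HilbertBasis ℕ ℝ H) (x : H →L[ℝ] ℝ) :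
    HasSum (fun j => (x (φ j)) ^ 2) (‖x‖ ^ 2) := by
  set y := (InnerProductSpace.toDual ℝ H).symm x with hy
  have h := vec_hasSum_sq φ y
  have h2 : ∀ j, ⟪(φ j : H), y⟫_ℝ = x (φ j) := by
    intro j
    rw [real_inner_comm, hy, InnerProductSpace.toDual_symm_apply]
  have h3 : ‖y‖ = ‖x‖ := LinearIsometryEquiv.norm_map _ x
  rw [h3] at h
  refine h.congr_fun fun j => ?_
  rw [h2 j]

lemma tail_eq (φ : HilbertBasis ℕ ℝ H) (x : H →L[ℝ] ℝ) (i : ℕ) :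
    ∑' k, (x (φ (i + 1 + k))) ^ 2
      = ‖x‖ ^ 2 - ∑ j ∈ Finset.range (i + 1), (x (φ j)) ^ 2 := by
  have h := (dual_hasSum_sq φ x).summable
  have h1 : ∑ j ∈ Finset.range (i + 1), (x (φ j)) ^ 2
      + ∑' k, (x (φ (k + (i + 1)))) ^ 2 = ∑' j, (x (φ j)) ^ 2 :=
    Summable.sum_add_tsum_nat_add (i + 1) h
  rw [(dual_hasSum_sq φ x).tsum_eq] at h1
  have h2 : ∑' k, (x (φ (i + 1 + k))) ^ 2 = ∑' k, (x (φ (k + (i + 1)))) ^ 2 :=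
    tsum_congr fun k => by rw [add_comm (i + 1) k]
  rw [h2]
  linarith

end GaussAux

namespace GaussAux

variable {H : Type*} [NormedAddCommGroup H] [InnerProductSpace ℝ H] [CompleteSpace H]

lemma summable_term (φ : HilbertBasis ℕ ℝ H) {lam : ℕ → ℝ} (hlam : ∀ i, 0 < lam i)
    (hsum : Summable lam) (v w : H) :
    Summable fun i => lam i * ⟪(φ i : H), v⟫_ℝ * ⟪(φ i : H), w⟫_ℝ := by
  set M := ∑' i, lam i with hM
  have hMle : ∀ i, lam i ≤ M := fun i => Summable.le_tsum hsum i fun j _ => (hlam j).le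
  refine Summable.of_abs ?_
  have hb : Summable fun i =>
      M / 2 * (⟪(φ i : H), v⟫_ℝ ^ 2 + ⟪(φ i : H), w⟫_ℝ ^ 2) :=
    (((vec_hasSum_sq φ v).summable.add (vec_hasSum_sq φ w).summable).mul_left _)
  refine Summable.of_nonneg_of_le (fun i => abs_nonneg _) (fun i => ?_) hb
  have h1 : |lam i * ⟪(φ i : H), v⟫_ℝ * ⟪(φ i : H), w⟫_ℝ|
      = lam i * (|⟪(φ i : H), v⟫_ℝ| * |⟪(φ i : H), w⟫_ℝ|) := by
    rw [abs_mul, abs_mul, abs_of_pos (hlam i), mul_assoc]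
  rw [h1]
  have h2 : |⟪(φ i : H), v⟫_ℝ| * |⟪(φ i : H), w⟫_ℝ|
      ≤ (⟪(φ i : H), v⟫_ℝ ^ 2 + ⟪(φ i : H), w⟫_ℝ ^ 2) / 2 := by
    nlinarith [sq_nonneg (|⟪(φ i : H), v⟫_ℝ| - |⟪(φ i : H), w⟫_ℝ|), sq_abs ⟪(φ i : H), v⟫_ℝ,
      sq_abs ⟪(φ i : H), w⟫_ℝ]
  have hM0 : 0 ≤ M := tsum_nonneg fun i => (hlam i).le
  calc lam i * (|⟪(φ i : H), v⟫_ℝ| * |⟪(φ i : H), w⟫_ℝ|)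
      ≤ M * ((⟪(φ i : H), v⟫_ℝ ^ 2 + ⟪(φ i : H), w⟫_ℝ ^ 2) / 2) := by
        apply mul_le_mul (hMle i) h2 (by positivity) hM0
    _ = M / 2 * (⟪(φ i : H), v⟫_ℝ ^ 2 + ⟪(φ i : H), w⟫_ℝ ^ 2) := by ring

set_option maxHeartbeats 1000000 in
/-- The covariance bilinear form as a continuous linear map. -/
noncomputable def sigmaCLM (φ : HilbertBasis ℕ ℝ H) (lam : ℕ → ℝ) (hlam : ∀ i, 0 < lam i)
    (hsum : Summable lam) : H →L[ℝ] H →L[ℝ] ℝ :=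
  LinearMap.mkContinuous₂
    (LinearMap.mk₂ ℝ (fun v w => ∑' i, lam i * ⟪(φ i : H), v⟫_ℝ * ⟪(φ i : H), w⟫_ℝ)
      (fun v v' w => by
        rw [← Summable.tsum_add (summable_term φ hlam hsum v w) (summable_term φ hlam hsum v' w)]
        exact tsum_congr fun i => by rw [inner_add_right]; ring)
      (fun c v w => by
        rw [smul_eq_mul, ← tsum_mul_left]
        exact tsum_congr fun i => by
          rw [real_inner_smul_right]; ring)
      (fun v w w' => by
        rw [← Summable.tsum_add (summable_term φ hlam hsum v w) (summable_term φ hlam hsum v w')]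
        exact tsum_congr fun i => by rw [inner_add_right]; ring)
      (fun c v w => by
        rw [smul_eq_mul, ← tsum_mul_left]
        exact tsum_congr fun i => by
          rw [real_inner_smul_right]; ring))
    (∑' i, lam i)
    (by
      intro v w
      simp only [LinearMap.mk₂_apply]
      have hnorm : ∀ u : H, ∀ i : ℕ, |⟪(φ i : H), u⟫_ℝ| ≤ ‖u‖ := by
        intro u i
        calc |⟪(φ i : H), u⟫_ℝ| ≤ ‖(φ i : H)‖ * ‖u‖ := abs_real_inner_le_norm _ _
          _ = ‖u‖ := by rw [φ.orthonormal.1 i, one_mul]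
      have hbd : ∀ i, |lam i * ⟪(φ i : H), v⟫_ℝ * ⟪(φ i : H), w⟫_ℝ|
          ≤ lam i * (‖v‖ * ‖w‖) := by
        intro i
        rw [abs_mul, abs_mul, abs_of_pos (hlam i), mul_assoc]
        refine mul_le_mul_of_nonneg_left ?_ (hlam i).le
        exact mul_le_mul (hnorm v i) (hnorm w i) (abs_nonneg _) (norm_nonneg v)
      calc ‖∑' i, lam i * ⟪(φ i : H), v⟫_ℝ * ⟪(φ i : H), w⟫_ℝ‖
          ≤ ∑' i, lam i * (‖v‖ * ‖w‖) := by
            refine (norm_tsum_le_tsum_norm ((summable_term φ hlam hsum v w).abs)).trans ?_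
            refine Summable.tsum_le_tsum (fun i => ?_) ((summable_term φ hlam hsum v w).abs) ?_
            · exact hbd i
            · exact hsum.mul_right _
        _ = (∑' i, lam i) * ‖v‖ * ‖w‖ := by rw [tsum_mul_right, mul_assoc])

lemma sigmaCLM_apply (φ : HilbertBasis ℕ ℝ H) (lam : ℕ → ℝ) (hlam : ∀ i, 0 < lam i)
    (hsum : Summable lam) (v w : H) :
    sigmaCLM φ lam hlam hsum v w = ∑' i, lam i * ⟪(φ i : H), v⟫_ℝ * ⟪(φ i : H), w⟫_ℝ := rfl

end GaussAux

namespace GaussAux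

lemma integral_bcf_gaussian_eq (f : BoundedContinuousFunction ℝ ℝ) {c : ℝ} (hc : 0 ≤ c) :
    ∫ t, f t ∂gaussianReal 0 c.toNNReal
      = ∫ x, f (Real.sqrt c * x) ∂gaussianReal 0 1 := by
  have hmap : gaussianReal 0 c.toNNReal
      = Measure.map (fun x => Real.sqrt c * x) (gaussianReal 0 1) := by
    rw [gaussianReal_map_const_mul (Real.sqrt c)]
    congr 1
    · rw [mul_zero]
    · ext
      simp [Real.sq_sqrt hc, hc]
  rw [hmap, integral_map (measurable_const_mul _).aemeasurable
    f.continuous.aestronglyMeasurable]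

lemma integral_bcf_gaussian_tendsto (f : BoundedContinuousFunction ℝ ℝ) {v : ℕ → ℝ} {l : ℝ}
    (hv : ∀ m, 0 ≤ v m) (hl : 0 ≤ l) (h : Tendsto v atTop (𝓝 l)) :
    Tendsto (fun m => ∫ t, f t ∂gaussianReal 0 (v m).toNNReal) atTop
      (𝓝 (∫ t, f t ∂gaussianReal 0 l.toNNReal)) := by
  simp_rw [integral_bcf_gaussian_eq f (hv _), integral_bcf_gaussian_eq f hl]
  refine tendsto_integral_of_dominated_convergence (fun _ => ‖f‖) ?_ (integrable_const _) ?_ ?_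
  · exact fun m => (f.continuous.comp (continuous_const.mul continuous_id)).aestronglyMeasurable
  · exact fun m => ae_of_all _ fun x => f.norm_coe_le_norm _
  · refine ae_of_all _ fun x => ?_
    have hsq : Tendsto (fun m => Real.sqrt (v m) * x) atTop (𝓝 (Real.sqrt l * x)) :=
      ((Real.continuous_sqrt.tendsto l).comp h).mul_const x
    exact (f.continuous.tendsto _).comp hsq

end GaussAux

namespace GaussAux

noncomputable def theta (ε : ℝ) : ℝ → ℝ := fun t => min 1 (max ((2 / ε) * (t - ε / 2)) 0)

lemma theta_nonneg (ε t : ℝ) : 0 ≤ theta ε t :=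
  le_min zero_le_one (le_max_right _ _)

lemma theta_le_one (ε t : ℝ) : theta ε t ≤ 1 := min_le_left _ _

lemma theta_continuous (ε : ℝ) : Continuous (theta ε) :=
  continuous_const.min (((continuous_const.mul (continuous_id.sub continuous_const))).max
    continuous_const)

lemma theta_eq_one {ε t : ℝ} (hε : 0 < ε) (h : ε ≤ t) : theta ε t = 1 := by
  unfold theta
  have h1 : (1:ℝ) ≤ (2 / ε) * (t - ε / 2) := by
    rw [div_mul_eq_mul_div, le_div_iff₀ hε]
    nlinarith
  rw [max_eq_left (le_trans zero_le_one h1), min_eq_left h1]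

lemma theta_zero {ε : ℝ} (hε : 0 < ε) : theta ε 0 = 0 := by
  unfold theta
  have h1 : (2 / ε) * (0 - ε / 2) ≤ 0 := by
    rw [zero_sub, mul_neg, neg_nonpos]
    positivity
  rw [max_eq_right h1, min_eq_right zero_le_one]

noncomputable def thetaBCF {α : Type*} [TopologicalSpace α] (ε : ℝ) (T : C(α, ℝ)) : α →ᵇ ℝ :=
  BoundedContinuousFunction.mkOfBound
    ⟨fun x => theta ε (T x), (theta_continuous ε).comp T.continuous⟩ 1
    (fun x y => by
      simp only [ContinuousMap.coe_mk]
      rw [Real.dist_eq, abs_sub_le_iff]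
      constructor
      · have := theta_le_one ε (T x); have := theta_nonneg ε (T y); linarith
      · have := theta_le_one ε (T y); have := theta_nonneg ε (T x); linarith)

@[simp] lemma thetaBCF_apply {α : Type*} [TopologicalSpace α] (ε : ℝ) (T : C(α, ℝ)) (x : α) :
    thetaBCF ε T x = theta ε (T x) := rfl

end GaussAux

open GaussAux

/-- **Theorem 2, necessity.** Let `(S_n)` be bounded linear test-statistics
on a separable real Hilbert space `H`.  Let `(λ_i)` be positive constants, `(φ_i)` an
orthonormal basis of `H`, `(Z_i)` i.i.d. standard normal random variables, and let
`S = ∑_i √λ_i Z_i ⟪φ_i, ·⟫`, whose partial sums are assumed to converge almost surely in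
the dual `H⋆` (operator norm).  If `S_n → S` in distribution, then Conditions (G0), (G1)
and (G2) hold, with `σ(ω,ω') = ∑_i λ_i ⟪φ_i,ω⟫⟪φ_i,ω'⟫`. -/
theorem conditions_necessary_of_tendsto_in_distribution
    {Ω : Type*} [MeasurableSpace Ω] (P : Measure Ω) [IsProbabilityMeasure P]
    {H : Type*} [NormedAddCommGroup H] [InnerProductSpace ℝ H]
    [CompleteSpace H] [TopologicalSpace.SeparableSpace H]
    [MeasurableSpace (H →L[ℝ] ℝ)] [BorelSpace (H →L[ℝ] ℝ)]
    (S : ℕ → Ω → (H →L[ℝ] ℝ)) (hSmeas : ∀ n, Measurable (S n))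
    (lam : ℕ → ℝ) (hlam : ∀ i, 0 < lam i)
    (φ : HilbertBasis ℕ ℝ H)
    {Ω' : Type*} [MeasurableSpace Ω'] (P' : Measure Ω') [IsProbabilityMeasure P']
    (Z : ℕ → Ω' → ℝ) (hZmeas : ∀ i, Measurable (Z i))
    (hZindep : iIndepFun Z P')
    (hZgauss : ∀ i, Measure.map (Z i) P' = gaussianReal 0 1)
    (Slim : Ω' → (H →L[ℝ] ℝ)) (hSlimMeas : Measurable Slim)
    -- the series defining `S` converges almost surely in `H⋆`:
    (hSlim : ∀ᵐ b' ∂P',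
      Tendsto
        (fun m => ∑ i ∈ Finset.range m,
          (Real.sqrt (lam i) * Z i b') • (innerSL ℝ (φ i : H)))
        atTop (𝓝 (Slim b')))
    -- `S_n → S` in distribution:
    (hconv : ∀ f : BoundedContinuousFunction (H →L[ℝ] ℝ) ℝ,
      Tendsto (fun n => ∫ a, f (S n a) ∂P) atTop (𝓝 (∫ b', f (Slim b') ∂P'))) :
    -- Condition (G0), with `σ(ω,ω') = ∑_i λ_i ⟪φ_i,ω⟫⟪φ_i,ω'⟫`:
    (∃ σ : H →L[ℝ] H →L[ℝ] ℝ,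
      (∀ v w : H, σ v w = ∑' i, lam i * ⟪(φ i : H), v⟫_ℝ * ⟪(φ i : H), w⟫_ℝ) ∧
      (∀ v w : H, σ v w = σ w v) ∧
      (∀ (m : ℕ) (ω : Fin m → H),
        0 ≤ ∑ i, ∑ j, σ (ω i) (ω j) ∧
        ∀ f : BoundedContinuousFunction ℝ ℝ,
          Tendsto (fun n => ∫ a, f (S n a (∑ i, ω i)) ∂P) atTop
            (𝓝 (∫ t, f t ∂gaussianReal 0 (∑ i, ∑ j, σ (ω i) (ω j)).toNNReal)))) ∧
    -- Condition (G1):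
    (∃ b : HilbertBasis ℕ ℝ H,
      Summable fun i =>
        ∑' j, lam j * ⟪(φ j : H), (b i : H)⟫_ℝ * ⟪(φ j : H), (b i : H)⟫_ℝ) ∧
    -- Condition (G2):
    (∃ b : HilbertBasis ℕ ℝ H, ∀ ε > (0 : ℝ),
      Tendsto
        (fun i => Filter.limsup
          (fun n => P {a | ε ≤ ∑' k : ℕ, (S n a (b (i + 1 + k))) ^ 2}) atTop)
        atTop (𝓝 (0 : ℝ≥0∞))) := by
  classical
  -- orthonormality in `ite` form
  have horth : ∀ i k : ℕ, ⟪(φ i : H), (φ k : H)⟫_ℝ = if i = k then 1 else 0 :=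
    fun i k => orthonormal_iff_ite.mp φ.orthonormal i k
  -- almost sure evaluation of the limit on basis vectors
  have hZeval : ∀ᵐ b' ∂P', ∀ k, Slim b' (φ k) = Real.sqrt (lam k) * Z k b' := by
    filter_upwards [hSlim] with b' hb'
    intro k
    have h1 : Tendsto (fun m => (∑ i ∈ Finset.range m,
        (Real.sqrt (lam i) * Z i b') • (innerSL ℝ (φ i : H))) (φ k)) atTop
        (𝓝 (Slim b' (φ k))) := by
      exact ((ContinuousLinearMap.apply ℝ ℝ ((φ k : H))).continuous.tendsto (Slim b')).comp hb'
    have h2 : ∀ m, k < m → (∑ i ∈ Finset.range m,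
        (Real.sqrt (lam i) * Z i b') • (innerSL ℝ (φ i : H))) (φ k)
        = Real.sqrt (lam k) * Z k b' := by
      intro m hm
      rw [ContinuousLinearMap.sum_apply]
      simp only [ContinuousLinearMap.smul_apply, innerSL_apply_apply, smul_eq_mul]
      simp_rw [horth]
      simp [Finset.sum_ite_eq', Finset.mem_range, hm]
    have h3 : Tendsto (fun m => (∑ i ∈ Finset.range m,
        (Real.sqrt (lam i) * Z i b') • (innerSL ℝ (φ i : H))) (φ k)) atTop
        (𝓝 (Real.sqrt (lam k) * Z k b')) := by
      refine Tendsto.congr' ?_ tendsto_const_nhds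
      filter_upwards [eventually_ge_atTop (k + 1)] with m hm
      exact (h2 m (Nat.lt_of_succ_le hm)).symm
    exact tendsto_nhds_unique h1 h3
  -- a.s. summability of `lam * Z^2`
  have hsumZ : ∀ᵐ b' ∂P', Summable fun k => lam k * (Z k b') ^ 2 := by
    filter_upwards [hZeval] with b' hb'
    refine ((dual_hasSum_sq φ (Slim b')).summable).congr fun k => ?_
    rw [hb' k, mul_pow, Real.sq_sqrt (hlam k).le]
  -- summability of `lam`
  have hlamsum : Summable lam :=
    summable_of_ae_summable_sq Z hZmeas hZindep hZgauss lam hlam hsumZ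
  set σ : H →L[ℝ] H →L[ℝ] ℝ := sigmaCLM φ lam hlam hlamsum with hσ_def
  have hσ : ∀ v w : H, σ v w = ∑' i, lam i * ⟪(φ i : H), v⟫_ℝ * ⟪(φ i : H), w⟫_ℝ :=
    sigmaCLM_apply φ lam hlam hlamsum
  have hσnn : ∀ v : H, 0 ≤ σ v v := by
    intro v
    rw [hσ]
    exact tsum_nonneg fun i => by
      rw [mul_assoc]; exact mul_nonneg (hlam i).le (mul_self_nonneg _)
  -- identification of the law of `Slim · v`
  have hint : ∀ (v : H) (f : BoundedContinuousFunction ℝ ℝ),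
      ∫ b', f (Slim b' v) ∂P' = ∫ t, f t ∂gaussianReal 0 (σ v v).toNNReal := by
    intro v f
    set c : ℕ → ℝ := fun i => Real.sqrt (lam i) * ⟪(φ i : H), v⟫_ℝ with hc_def
    set W : ℕ → Ω' → ℝ := fun m b' => ∑ i ∈ Finset.range m, c i * Z i b' with hW_def
    have hWmeas : ∀ m, Measurable (W m) := fun m =>
      Finset.measurable_sum (Finset.range m) fun i _ => (hZmeas i).const_mul _
    have hWtend : ∀ᵐ b' ∂P', Tendsto (fun m => W m b') atTop (𝓝 (Slim b' v)) := by
      filter_upwards [hSlim] with b' hb'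
      have h1 := ((ContinuousLinearMap.apply ℝ ℝ v).continuous.tendsto (Slim b')).comp hb'
      refine Tendsto.congr (fun m => ?_) h1
      simp only [Function.comp, ContinuousLinearMap.apply_apply,
        ContinuousLinearMap.sum_apply, ContinuousLinearMap.smul_apply, innerSL_apply_apply,
        smul_eq_mul, hW_def, hc_def]
      exact Finset.sum_congr rfl fun i _ => by ring
    have h2 : Tendsto (fun m => ∫ b', f (W m b') ∂P') atTop
        (𝓝 (∫ b', f (Slim b' v) ∂P')) := by
      refine tendsto_integral_of_dominated_convergence (fun _ => ‖f‖) ?_ (integrable_const _)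
        ?_ ?_
      · exact fun m => (f.continuous.measurable.comp (hWmeas m)).aestronglyMeasurable
      · exact fun m => ae_of_all _ fun b' => f.norm_coe_le_norm _
      · filter_upwards [hWtend] with b' hb'
        exact (f.continuous.tendsto _).comp hb'
    have hvm : ∀ m, (0:ℝ) ≤ ∑ i ∈ Finset.range m,
        lam i * ⟪(φ i : H), v⟫_ℝ * ⟪(φ i : H), v⟫_ℝ :=
      fun m => Finset.sum_nonneg fun i _ => by
        rw [mul_assoc]; exact mul_nonneg (hlam i).le (mul_self_nonneg _)
    have h3 : ∀ m, ∫ b', f (W m b') ∂P'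
        = ∫ t, f t ∂gaussianReal 0 (∑ i ∈ Finset.range m,
            lam i * ⟪(φ i : H), v⟫_ℝ * ⟪(φ i : H), v⟫_ℝ).toNNReal := by
      intro m
      have hmap := map_sum_gaussian Z hZmeas hZindep hZgauss c m
      have hNN : (∑ i ∈ Finset.range m, (NNReal.mk ((c i) ^ 2) (sq_nonneg _)))
          = (∑ i ∈ Finset.range m,
              lam i * ⟪(φ i : H), v⟫_ℝ * ⟪(φ i : H), v⟫_ℝ).toNNReal := by
        refine NNReal.coe_injective ?_
        rw [NNReal.coe_sum, Real.coe_toNNReal _ (hvm m)]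
        refine Finset.sum_congr rfl fun i _ => ?_
        simp only [NNReal.coe_mk, hc_def]
        rw [mul_pow, Real.sq_sqrt (hlam i).le]
        ring
      rw [← integral_map (hWmeas m).aemeasurable f.continuous.aestronglyMeasurable, hmap, hNN]
    have hsummv := summable_term φ hlam hlamsum v v
    have h4 : Tendsto (fun m => ∫ t, f t ∂gaussianReal 0
        ((∑ i ∈ Finset.range m,
          lam i * ⟪(φ i : H), v⟫_ℝ * ⟪(φ i : H), v⟫_ℝ).toNNReal)) atTop
        (𝓝 (∫ t, f t ∂gaussianReal 0 (σ v v).toNNReal)) := by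
      refine integral_bcf_gaussian_tendsto f hvm (hσnn v) ?_
      rw [hσ]
      exact hsummv.hasSum.tendsto_sum_nat
    have h4' : Tendsto (fun m => ∫ b', f (W m b') ∂P') atTop
        (𝓝 (∫ t, f t ∂gaussianReal 0 (σ v v).toNNReal)) := by
      simp_rw [h3]; exact h4
    exact tendsto_nhds_unique h2 h4'
  refine ⟨⟨σ, hσ, ?_, ?_⟩, ⟨φ, ?_⟩, ⟨φ, ?_⟩⟩
  · -- symmetry
    intro v w
    rw [hσ, hσ]
    exact tsum_congr fun i => by ring
  · -- G0 convergence
    intro m ω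
    set s : H := ∑ i, ω i with hs_def
    have h1 : σ s = ∑ i, σ (ω i) := by rw [hs_def, map_sum]
    have hexp : ∑ i, ∑ j, σ (ω i) (ω j) = σ s s := by
      calc ∑ i, ∑ j, σ (ω i) (ω j) = ∑ i, σ (ω i) s := by
            refine Finset.sum_congr rfl fun i _ => ?_
            rw [hs_def, map_sum]
        _ = σ s s := by rw [h1, ContinuousLinearMap.sum_apply]
    constructor
    · rw [hexp]; exact hσnn s
    · intro f
      have hF := hconv (f.compContinuous
        ⟨fun T : H →L[ℝ] ℝ => T s, (ContinuousLinearMap.apply ℝ ℝ s).continuous⟩)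
      rw [hexp]
      simp only [BoundedContinuousFunction.compContinuous_apply, ContinuousMap.coe_mk] at hF
      rw [← hint s f]
      exact hF
  · -- G1
    have heq : ∀ i : ℕ, (∑' j, lam j * ⟪(φ j : H), (φ i : H)⟫_ℝ * ⟪(φ j : H), (φ i : H)⟫_ℝ)
        = lam i := by
      intro i
      rw [tsum_eq_single i]
      · rw [horth i i]; simp
      · intro j hj
        rw [horth j i]
        simp [hj]
    exact hlamsum.congr fun i => (heq i).symm
  · -- G2
    intro ε hε
    set T : ℕ → C(H →L[ℝ] ℝ, ℝ) := fun i =>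
      ⟨fun x => ‖x‖ ^ 2 - ∑ j ∈ Finset.range (i + 1), (x (φ j)) ^ 2, by
        refine (continuous_norm.pow 2).sub ?_
        exact continuous_finset_sum _ fun j _ =>
          ((ContinuousLinearMap.apply ℝ ℝ ((φ j : H))).continuous.pow 2)⟩ with hT_def
    set g : ℕ → (H →L[ℝ] ℝ) →ᵇ ℝ := fun i => thetaBCF ε (T i) with hg_def
    have hTeq : ∀ (i : ℕ) (x : H →L[ℝ] ℝ), (∑' k, (x (φ (i + 1 + k))) ^ 2) = T i x := by
      intro i x
      calc (∑' k, (x (φ (i + 1 + k))) ^ 2)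
          = ‖x‖ ^ 2 - ∑ j ∈ Finset.range (i + 1), (x (φ j)) ^ 2 := tail_eq φ x i
        _ = T i x := by simp [hT_def]
    have hTmeas : ∀ i, Measurable fun x : H →L[ℝ] ℝ => T i x :=
      fun i => (T i).continuous.measurable
    have hsetEq : ∀ n i, {a : Ω | ε ≤ ∑' k, (S n a (φ (i + 1 + k))) ^ 2}
        = (fun a => T i (S n a)) ⁻¹' Set.Ici ε := by
      intro n i
      ext a
      simp only [Set.mem_setOf_eq, Set.mem_preimage, Set.mem_Ici, hTeq i (S n a)]
    have hsetMeas : ∀ n i, MeasurableSet {a : Ω | ε ≤ ∑' k, (S n a (φ (i + 1 + k))) ^ 2} := by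
      intro n i
      rw [hsetEq n i]
      exact ((hTmeas i).comp (hSmeas n)) measurableSet_Ici
    have hgnn : ∀ (i : ℕ) (x : H →L[ℝ] ℝ), 0 ≤ g i x := by
      intro i x; rw [hg_def]; simp only [thetaBCF_apply]; exact theta_nonneg ε _
    have hgle : ∀ (i : ℕ) (x : H →L[ℝ] ℝ), g i x ≤ 1 := by
      intro i x; rw [hg_def]; simp only [thetaBCF_apply]; exact theta_le_one ε _
    have hgint : ∀ n i, Integrable (fun a => g i (S n a)) P := by
      intro n i
      refine Integrable.mono' (integrable_const 1)
        ((g i).continuous.measurable.comp (hSmeas n)).aestronglyMeasurable ?_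
      exact ae_of_all _ fun a => by
        rw [Real.norm_eq_abs, abs_of_nonneg (hgnn i _)]
        exact hgle i _
    have hPle : ∀ n i, P {a : Ω | ε ≤ ∑' k, (S n a (φ (i + 1 + k))) ^ 2}
        ≤ ENNReal.ofReal (∫ a, g i (S n a) ∂P) := by
      intro n i
      set A := {a : Ω | ε ≤ ∑' k, (S n a (φ (i + 1 + k))) ^ 2} with hA_def
      have hAmeas := hsetMeas n i
      have hile : ∀ a, A.indicator (fun _ => (1:ℝ)) a ≤ g i (S n a) := by
        intro a
        by_cases ha : a ∈ A
        · rw [Set.indicator_of_mem ha]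
          have hTa : ε ≤ T i (S n a) := by
            have h' : ε ≤ ∑' k, (S n a (φ (i + 1 + k))) ^ 2 := ha
            exact h'.trans_eq (hTeq i (S n a))
          rw [hg_def]; simp only [thetaBCF_apply]
          rw [theta_eq_one hε hTa]
        · rw [Set.indicator_of_notMem ha]
          exact hgnn i _
      have hind : ∫ a, A.indicator (fun _ => (1:ℝ)) a ∂P = (P A).toReal := by
        rw [integral_indicator_const _ hAmeas]
        simp [measureReal_def]
        rfl
      have hcmp : (P A).toReal ≤ ∫ a, g i (S n a) ∂P := by
        rw [← hind]
        exact integral_mono ((integrable_const 1).indicator hAmeas) (hgint n i) hile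
      calc P A = ENNReal.ofReal ((P A).toReal) := by
            rw [ENNReal.ofReal_toReal (measure_ne_top P A)]
        _ ≤ ENNReal.ofReal (∫ a, g i (S n a) ∂P) := ENNReal.ofReal_le_ofReal hcmp
    have hlimsup : ∀ i, Filter.limsup
        (fun n => P {a : Ω | ε ≤ ∑' k, (S n a (φ (i + 1 + k))) ^ 2}) atTop
        ≤ ENNReal.ofReal (∫ b', g i (Slim b') ∂P') := by
      intro i
      calc Filter.limsup (fun n => P {a : Ω | ε ≤ ∑' k, (S n a (φ (i + 1 + k))) ^ 2}) atTop
          ≤ Filter.limsup (fun n => ENNReal.ofReal (∫ a, g i (S n a) ∂P)) atTop :=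
            Filter.limsup_le_limsup (Filter.Eventually.of_forall fun n => hPle n i)
        _ = ENNReal.ofReal (∫ b', g i (Slim b') ∂P') :=
            (((ENNReal.continuous_ofReal.tendsto _).comp (hconv (g i)))).limsup_eq
    have htend0 : Tendsto (fun i => ∫ b', g i (Slim b') ∂P') atTop (𝓝 0) := by
      have h0 : Tendsto (fun i => ∫ b', g i (Slim b') ∂P') atTop
          (𝓝 (∫ _b', (0:ℝ) ∂P')) := by
        refine tendsto_integral_of_dominated_convergence (fun _ => 1) ?_ (integrable_const _)
          ?_ ?_
        · exact fun i => ((g i).continuous.measurable.comp hSlimMeas).aestronglyMeasurable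
        · exact fun i => ae_of_all _ fun b' => by
            rw [Real.norm_eq_abs, abs_of_nonneg (hgnn i _)]
            exact hgle i _
        · refine ae_of_all _ fun b' => ?_
          have hT0 : Tendsto (fun i => T i (Slim b')) atTop (𝓝 0) := by
            have hps := (dual_hasSum_sq φ (Slim b')).tendsto_sum_nat
            have hps' : Tendsto (fun i => ∑ j ∈ Finset.range (i + 1), ((Slim b') (φ j)) ^ 2)
                atTop (𝓝 (‖Slim b'‖ ^ 2)) := hps.comp (tendsto_add_atTop_nat 1)
            have hsub := Tendsto.sub (tendsto_const_nhds (x := ‖Slim b'‖ ^ 2) (f := atTop)) hps'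
            rw [sub_self] at hsub
            refine hsub.congr fun i => ?_
            simp [hT_def]
          have : Tendsto (fun i => theta ε (T i (Slim b'))) atTop (𝓝 (theta ε 0)) :=
            ((theta_continuous ε).tendsto 0).comp hT0
          rw [theta_zero hε] at this
          simpa [hg_def, thetaBCF_apply] using this
      simpa using h0
    have hofReal : Tendsto (fun i => ENNReal.ofReal (∫ b', g i (Slim b') ∂P')) atTop
        (𝓝 0) := by
      have := (ENNReal.continuous_ofReal.tendsto 0).comp htend0
      simpa [Function.comp_def] using this
    refine tendsto_of_tendsto_of_tendsto_of_le_of_le tendsto_const_nhds hofReal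
      (fun i => zero_le) (fun i => hlimsup i)
end

section
/- Let H be a separable RKHS of real-valued functions on a set X with reproducing kernel K, and let σ : H × H → ℝ be a continuous symmetric bilinear form with σ(ω,ω) ≥ 0 for all ω ∈ H, satisfying Condition (G1). Define T_σ : H → H by (T_σ f)(x) = σ(f, K_x) for all x ∈ X. Then: (1) T_σ f ∈ H for every f ∈ H; (2) ⟨T_σ f, ω⟩ = σ(f,ω) for all f, ω ∈ H; (3) T_σ is self-adjoint; (4) T_σ is trace class, with trace ∑_{i≥1} ⟨φ_i, T_σ φ_i⟩ = ∑_{i≥1} σ(φ_i,φ_i) < ∞ for every orthonormal basis (φ_i)_{i≥1} of H. -/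
open MeasureTheory Filter Topology
open scoped InnerProductSpace

section Aux

variable {H : Type*} [NormedAddCommGroup H] [InnerProductSpace ℝ H]

/-- Bundled positive symmetric continuous bilinear form. -/
structure PosBilin (H : Type*) [NormedAddCommGroup H] [InnerProductSpace ℝ H] : Type _ where
  σ : H →L[ℝ] H →L[ℝ] ℝ
  symm : ∀ v w, σ v w = σ w v
  pos : ∀ v, 0 ≤ σ v v

/-- Type synonym of `H` carrying the semi-inner-product `σ`. -/
def PosBilin.sp (_p : PosBilin H) : Type _ := H

instance (p : PosBilin H) : AddCommGroup p.sp := inferInstanceAs (AddCommGroup H)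
instance (p : PosBilin H) : Module ℝ p.sp := inferInstanceAs (Module ℝ H)

noncomputable instance PosBilin.core (p : PosBilin H) : PreInnerProductSpace.Core ℝ p.sp where
  inner u v := p.σ u v
  conj_inner_symm x y := by simpa using p.symm y x
  re_inner_nonneg x := by simpa using p.pos x
  add_left x y z := by
    exact (congrArg (fun f : H →L[ℝ] ℝ => f z) (map_add p.σ (x : H) (y : H))).trans rfl
  smul_left x y r := by
    exact (congrArg (fun f : H →L[ℝ] ℝ => f y) (map_smul p.σ r (x : H))).trans rfl

noncomputable instance (p : PosBilin H) : SeminormedAddCommGroup p.sp :=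
  @InnerProductSpace.Core.toSeminormedAddCommGroup ℝ p.sp _ _ _ p.core

noncomputable instance (p : PosBilin H) : InnerProductSpace ℝ p.sp :=
  { @InnerProductSpace.Core.toNormedSpace ℝ p.sp _ _ _ p.core with
    inner := fun u v => p.σ u v
    norm_sq_eq_re_inner := fun x => by
      have h₁ : ‖x‖ = Real.sqrt (p.σ x x) := rfl
      rw [h₁, Real.sq_sqrt (p.pos x)]
      rfl
    conj_inner_symm := fun x y => by simpa using p.symm y x
    add_left := fun x y z => by
      exact (congrArg (fun f : H →L[ℝ] ℝ => f z) (map_add p.σ (x : H) (y : H))).trans rfl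
    smul_left := fun x y r => by
      exact (congrArg (fun f : H →L[ℝ] ℝ => f y) (map_smul p.σ r (x : H))).trans rfl }

end Aux

section Aux2

variable {H : Type*} [NormedAddCommGroup H] [InnerProductSpace ℝ H]

theorem PosBilin.norm_sp (p : PosBilin H) (x : p.sp) : ‖x‖ = Real.sqrt (p.σ x x) := rfl

theorem PosBilin.inner_sp (p : PosBilin H) (x y : p.sp) : ⟪x, y⟫_ℝ = p.σ x y := rfl

/-- The natural linear map `H → H_σ`. -/
def PosBilin.toSp (p : PosBilin H) : H →ₗ[ℝ] p.sp where
  toFun x := x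
  map_add' _ _ := rfl
  map_smul' _ _ := rfl

/-- The natural map `H → completion of H_σ` as a continuous linear map. -/
noncomputable def PosBilin.Jmap (p : PosBilin H) : H →L[ℝ] UniformSpace.Completion p.sp :=
  UniformSpace.Completion.toComplL.comp <|
    LinearMap.mkContinuous p.toSp (Real.sqrt ‖p.σ‖) (fun x => by
      have h1 : ‖p.toSp x‖ = Real.sqrt (p.σ x x) := rfl
      have h2 : p.σ x x ≤ ‖p.σ‖ * (‖x‖ * ‖x‖) := by
        calc p.σ x x ≤ ‖p.σ x x‖ := le_abs_self _
        _ ≤ ‖p.σ x‖ * ‖x‖ := (p.σ x).le_opNorm x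
        _ ≤ (‖p.σ‖ * ‖x‖) * ‖x‖ := by gcongr; exact p.σ.le_opNorm x
        _ = ‖p.σ‖ * (‖x‖ * ‖x‖) := by ring
      rw [h1]
      calc Real.sqrt (p.σ x x) ≤ Real.sqrt (‖p.σ‖ * (‖x‖ * ‖x‖)) := Real.sqrt_le_sqrt h2
      _ = Real.sqrt ‖p.σ‖ * ‖x‖ := by
          rw [Real.sqrt_mul (norm_nonneg p.σ), Real.sqrt_mul_self (norm_nonneg x)])

theorem PosBilin.inner_Jmap (p : PosBilin H) (u v : H) :
    ⟪p.Jmap u, p.Jmap v⟫_ℝ = p.σ u v := by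
  have h : ⟪(p.toSp u : UniformSpace.Completion p.sp), (p.toSp v : _)⟫_ℝ
      = ⟪p.toSp u, p.toSp v⟫_ℝ := UniformSpace.Completion.inner_coe _ _
  have h2 : ⟪p.toSp u, p.toSp v⟫_ℝ = p.σ u v := rfl
  rw [← h2, ← h]
  rfl

end Aux2

section Aux3

variable {H : Type*} [NormedAddCommGroup H] [InnerProductSpace ℝ H] [CompleteSpace H]

theorem PosBilin.tsum_eq_hs (p : PosBilin H) (b : HilbertBasis ℕ ℝ H)
    {ι : Type*} (e : HilbertBasis ι ℝ (UniformSpace.Completion p.sp)) :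
    ∑' i, ENNReal.ofReal (p.σ (b i) (b i))
      = ∑' α, ENNReal.ofReal (‖(ContinuousLinearMap.adjoint p.Jmap) (e α)‖ ^ 2) := by
  let A := ContinuousLinearMap.adjoint p.Jmap
  show ∑' i, ENNReal.ofReal (p.σ (b i) (b i)) = ∑' α, ENNReal.ofReal (‖A (e α)‖ ^ 2)
  have step1 : ∀ i, ENNReal.ofReal (p.σ (b i) (b i))
      = ∑' α, ENNReal.ofReal ((⟪A (e α), b i⟫_ℝ) ^ 2) := by
    intro i
    have hx : HasSum (fun α => ⟪p.Jmap (b i), e α⟫_ℝ * ⟪e α, p.Jmap (b i)⟫_ℝ)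
        ⟪p.Jmap (b i), p.Jmap (b i)⟫_ℝ := e.hasSum_inner_mul_inner _ _
    have hterm : ∀ α, ⟪p.Jmap (b i), e α⟫_ℝ * ⟪e α, p.Jmap (b i)⟫_ℝ
        = (⟪A (e α), b i⟫_ℝ) ^ 2 := fun α => by
      show _ = (⟪ContinuousLinearMap.adjoint p.Jmap (e α), b i⟫_ℝ) ^ 2
      rw [ContinuousLinearMap.adjoint_inner_left, sq, real_inner_comm (p.Jmap (b i)) (e α)]
    have hx' : HasSum (fun α => (⟪A (e α), b i⟫_ℝ) ^ 2) (p.σ (b i) (b i)) := by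
      rw [← p.inner_Jmap]
      exact hx.congr_fun fun α => (hterm α).symm
    rw [← hx'.tsum_eq]
    exact ENNReal.ofReal_tsum_of_nonneg (fun α => sq_nonneg _) hx'.summable
  have step3 : ∀ α, ∑' i, ENNReal.ofReal ((⟪A (e α), b i⟫_ℝ) ^ 2)
      = ENNReal.ofReal (‖A (e α)‖ ^ 2) := by
    intro α
    have hx : HasSum (fun i => ⟪A (e α), b i⟫_ℝ * ⟪b i, A (e α)⟫_ℝ)
        ⟪A (e α), A (e α)⟫_ℝ := b.hasSum_inner_mul_inner _ _
    have hx' : HasSum (fun i => (⟪A (e α), b i⟫_ℝ) ^ 2) (‖A (e α)‖ ^ 2) := by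
      rw [← real_inner_self_eq_norm_sq]
      exact hx.congr_fun fun i => by rw [sq, real_inner_comm (b i) (A (e α))]
    rw [← hx'.tsum_eq]
    exact (ENNReal.ofReal_tsum_of_nonneg (fun i => sq_nonneg _) hx'.summable).symm
  calc ∑' i, ENNReal.ofReal (p.σ (b i) (b i))
      = ∑' i, ∑' α, ENNReal.ofReal ((⟪A (e α), b i⟫_ℝ) ^ 2) := by
        exact tsum_congr step1
    _ = ∑' α, ∑' i, ENNReal.ofReal ((⟪A (e α), b i⟫_ℝ) ^ 2) := ENNReal.tsum_comm
    _ = ∑' α, ENNReal.ofReal (‖A (e α)‖ ^ 2) := tsum_congr step3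

theorem PosBilin.trace_eq (p : PosBilin H) (b c : HilbertBasis ℕ ℝ H) :
    ∑' i, ENNReal.ofReal (p.σ (b i) (b i)) = ∑' i, ENNReal.ofReal (p.σ (c i) (c i)) := by
  obtain ⟨w, e, -⟩ := exists_hilbertBasis ℝ (UniformSpace.Completion p.sp)
  rw [p.tsum_eq_hs b e, p.tsum_eq_hs c e]

end Aux3

/-- Let `H` be a separable RKHS on a set `X` (encoded by its feature map
`k : X → H`, so `K_x = k x` and elements `ω` of `H` are the functions `x ↦ ⟪k x, ω⟫`), and
let `σ` be a continuous symmetric bilinear form on `H` with `σ(ω,ω) ≥ 0`, satisfying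
Condition (G1) (for some orthonormal basis `(φ_i)`, `∑ σ(φ_i,φ_i) < ∞`).  Then the operator
`T_σ` defined by `(T_σ f)(x) = σ(f, K_x)` maps `H` into `H`, satisfies
`⟪T_σ f, ω⟫ = σ(f, ω)` for all `f, ω`, is self-adjoint, and is trace class: for every
orthonormal basis `(φ_i)` the trace `∑ ⟪φ_i, T_σ φ_i⟫ = ∑ σ(φ_i,φ_i)` is finite. -/
theorem exists_traceClass_operator_of_bilinear_form
    {X : Type*} {H : Type*} [NormedAddCommGroup H] [InnerProductSpace ℝ H]
    [CompleteSpace H] [TopologicalSpace.SeparableSpace H]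
    (k : X → H)
    (hdense : (Submodule.span ℝ (Set.range k)).topologicalClosure = ⊤)
    (σ : H →L[ℝ] H →L[ℝ] ℝ)
    (hσsymm : ∀ v w : H, σ v w = σ w v)
    (hσpos : ∀ v : H, 0 ≤ σ v v)
    (b₀ : HilbertBasis ℕ ℝ H)
    (hG1 : Summable fun i => σ (b₀ i) (b₀ i)) :
    ∃ T : H →L[ℝ] H,
      -- (1) `T_σ f ∈ H`, with function values `(T_σ f)(x) = σ(f, K_x)`:
      (∀ f : H, ∀ x : X, ⟪k x, T f⟫_ℝ = σ f (k x)) ∧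
      -- (2) `⟪T_σ f, ω⟫ = σ(f, ω)`:
      (∀ f ω : H, ⟪T f, ω⟫_ℝ = σ f ω) ∧
      -- (3) `T_σ` is self-adjoint:
      IsSelfAdjoint T ∧
      -- (4) `T_σ` is trace class, with finite trace `∑ ⟪φ_i, T φ_i⟫ = ∑ σ(φ_i, φ_i)`
      --     for every orthonormal basis:
      (∀ b : HilbertBasis ℕ ℝ H,
        (Summable fun i => ⟪b i, T (b i)⟫_ℝ) ∧
        (Summable fun i => σ (b i) (b i)) ∧
        ∑' i, ⟪b i, T (b i)⟫_ℝ = ∑' i, σ (b i) (b i)) := by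
  classical
  let T : H →L[ℝ] H := LinearMap.mkContinuous
    { toFun := fun f => (InnerProductSpace.toDual ℝ H).symm (σ f)
      map_add' := fun f g => by
        show (InnerProductSpace.toDual ℝ H).symm (σ (f + g)) = _
        rw [map_add, map_add]
      map_smul' := fun r f => by
        show (InnerProductSpace.toDual ℝ H).symm (σ (r • f)) = _
        rw [_root_.map_smul, LinearIsometryEquiv.map_smulₛₗ]
        simp }
    ‖σ‖ (fun f => by
      show ‖(InnerProductSpace.toDual ℝ H).symm (σ f)‖ ≤ _
      rw [LinearIsometryEquiv.norm_map]
      exact σ.le_opNorm f)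
  have hT : ∀ f ω : H, ⟪T f, ω⟫_ℝ = σ f ω := fun f ω =>
    InnerProductSpace.toDual_symm_apply
  refine ⟨T, fun f x => by rw [real_inner_comm]; exact hT f (k x), hT, ?_, ?_⟩
  · rw [ContinuousLinearMap.isSelfAdjoint_iff_isSymmetric]
    intro u v
    simp only [ContinuousLinearMap.coe_coe]
    rw [hT u v, hσsymm u v, ← hT v u, real_inner_comm]
  · intro b
    let p : PosBilin H := ⟨σ, hσsymm, hσpos⟩
    have hbb : ∀ i, ⟪b i, T (b i)⟫_ℝ = σ (b i) (b i) := fun i => by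
      rw [real_inner_comm]; exact hT (b i) (b i)
    have hEq : ∑' i, ENNReal.ofReal (σ (b i) (b i))
        = ∑' i, ENNReal.ofReal (σ (b₀ i) (b₀ i)) := p.trace_eq b b₀
    have hfin : ∑' i, ENNReal.ofReal (σ (b₀ i) (b₀ i)) ≠ ⊤ := by
      rw [← ENNReal.ofReal_tsum_of_nonneg (fun i => hσpos _) hG1]
      exact ENNReal.ofReal_ne_top
    have hbfin : ∑' i, ENNReal.ofReal (σ (b i) (b i)) ≠ ⊤ := hEq ▸ hfin
    have hsummb : Summable fun i => σ (b i) (b i) := by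
      have h := ENNReal.summable_toReal hbfin
      exact h.congr fun i => ENNReal.toReal_ofReal (hσpos _)
    exact ⟨hsummb.congr fun i => (hbb i).symm, hsummb, tsum_congr hbb⟩
end

section
/- Let (S_n)_{n≥1} be a sequence of bounded linear test-statistics on a separable real Hilbert space H satisfying Conditions (G0) and (G1). If Condition (G2) holds for one orthonormal basis (φ_i)_{i≥1} of H, then it holds for every orthonormal basis of H: for any orthonormal basis (ψ_i)_{i≥1} and every ε > 0, lim_{i→∞} limsup_{n→∞} P(∑_{k>i} S_n(ψ_k)² ≥ ε) = 0. -/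
open MeasureTheory ProbabilityTheory Filter Topology
open scoped ENNReal NNReal InnerProductSpace BoundedContinuousFunction

namespace CondG2Aux

variable {H : Type*} [NormedAddCommGroup H] [InnerProductSpace ℝ H] [CompleteSpace H]

/-- The "tail" of `x` beyond the first `i+1` coordinates of the Hilbert basis `b`. -/
noncomputable def tailPart (b : HilbertBasis ℕ ℝ H) (i : ℕ) (x : H) : H :=
  x - ∑ k ∈ Finset.range (i + 1), (inner ℝ x (b k) : ℝ) • b k

lemma parseval (b : HilbertBasis ℕ ℝ H) (x : H) :
    HasSum (fun k => (inner ℝ x (b k) : ℝ) ^ 2) (‖x‖ ^ 2) := by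
  have h := b.hasSum_inner_mul_inner x x
  simp only [← real_inner_self_eq_norm_sq] at *
  have e : (fun k => (inner ℝ x (b k) : ℝ) ^ 2) = fun i => (inner ℝ x (b i) : ℝ) * inner ℝ (b i) x := by
    funext k; rw [sq, real_inner_comm x (b k)]
  rw [e]; exact h

lemma inner_basis_self (b : HilbertBasis ℕ ℝ H) (k : ℕ) : (inner ℝ (b k) (b k) : ℝ) = 1 := by
  simpa using orthonormal_iff_ite.mp b.orthonormal k k

lemma inner_basis_ne (b : HilbertBasis ℕ ℝ H) {l k : ℕ} (h : l ≠ k) :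
    (inner ℝ (b l) (b k) : ℝ) = 0 := by
  simpa [h] using orthonormal_iff_ite.mp b.orthonormal l k

lemma inner_tailPart_basis (b : HilbertBasis ℕ ℝ H) (i : ℕ) (x : H) {k : ℕ}
    (hk : k ∈ Finset.range (i + 1)) : (inner ℝ (tailPart b i x) (b k) : ℝ) = 0 := by
  simp only [tailPart, inner_sub_left, sum_inner, real_inner_smul_left]
  rw [Finset.sum_eq_single k]
  · rw [inner_basis_self]; simp
  · intro l _ hl
    rw [inner_basis_ne b hl]; simp
  · intro h; exact absurd hk h

lemma inner_tailPart_head (b : HilbertBasis ℕ ℝ H) (i : ℕ) (x : H) :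
    (inner ℝ (tailPart b i x) (∑ k ∈ Finset.range (i + 1), (inner ℝ x (b k) : ℝ) • b k) : ℝ) = 0 := by
  rw [inner_sum]
  refine Finset.sum_eq_zero fun k hk => ?_
  rw [real_inner_smul_right, inner_tailPart_basis b i x hk, mul_zero]

lemma norm_sq_head (b : HilbertBasis ℕ ℝ H) (i : ℕ) (x : H) :
    ‖∑ k ∈ Finset.range (i + 1), (inner ℝ x (b k) : ℝ) • b k‖ ^ 2
      = ∑ k ∈ Finset.range (i + 1), (inner ℝ x (b k) : ℝ) ^ 2 := by
  rw [← real_inner_self_eq_norm_sq, inner_sum]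
  refine Finset.sum_congr rfl fun k hk => ?_
  rw [real_inner_smul_right, sum_inner]
  rw [Finset.sum_eq_single k]
  · rw [real_inner_smul_left, inner_basis_self]; ring
  · intro l _ hl
    rw [real_inner_smul_left, inner_basis_ne b hl]; simp
  · intro h; exact absurd hk h

lemma norm_sq_split (b : HilbertBasis ℕ ℝ H) (i : ℕ) (x : H) :
    ‖x‖ ^ 2 = ∑ k ∈ Finset.range (i + 1), (inner ℝ x (b k) : ℝ) ^ 2 + ‖tailPart b i x‖ ^ 2 := by
  have hx : x = (∑ k ∈ Finset.range (i + 1), (inner ℝ x (b k) : ℝ) • b k) + tailPart b i x := by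
    simp [tailPart]
  nth_rewrite 1 [hx]
  rw [norm_add_sq_real, norm_sq_head, real_inner_comm, inner_tailPart_head]
  ring

lemma tail_tsum_eq (b : HilbertBasis ℕ ℝ H) (i : ℕ) (x : H) :
    ∑' k, (inner ℝ x (b (i + 1 + k)) : ℝ) ^ 2 = ‖tailPart b i x‖ ^ 2 := by
  have h := parseval b x
  have hsum := h.summable
  have hsplit := (Summable.sum_add_tsum_nat_add (f := fun k => (inner ℝ x (b k) : ℝ) ^ 2) (i + 1) hsum)
  have : ∑' k, (inner ℝ x (b (i + 1 + k)) : ℝ) ^ 2 = ∑' k, (inner ℝ x (b (k + (i + 1))) : ℝ) ^ 2 := by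
    congr 1; ext k; ring_nf
  rw [this]
  have := norm_sq_split b i x
  rw [h.tsum_eq] at hsplit
  linarith

lemma tailPart_norm_le (b : HilbertBasis ℕ ℝ H) (i : ℕ) (x : H) :
    ‖tailPart b i x‖ ≤ ‖x‖ := by
  have h := norm_sq_split b i x
  have h2 : ‖tailPart b i x‖ ^ 2 ≤ ‖x‖ ^ 2 := by
    have : (0:ℝ) ≤ ∑ k ∈ Finset.range (i + 1), (inner ℝ x (b k) : ℝ) ^ 2 :=
      Finset.sum_nonneg fun _ _ => sq_nonneg _
    linarith
  nlinarith [norm_nonneg (tailPart b i x), norm_nonneg x]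

lemma tailPart_add (b : HilbertBasis ℕ ℝ H) (i : ℕ) (y z : H) :
    tailPart b i (y + z) = tailPart b i y + tailPart b i z := by
  simp only [tailPart, inner_add_left, add_smul, Finset.sum_add_distrib]
  abel

lemma tailPart_smul (b : HilbertBasis ℕ ℝ H) (i : ℕ) (c : ℝ) (y : H) :
    tailPart b i (c • y) = c • tailPart b i y := by
  simp only [tailPart, real_inner_smul_left, smul_sub, Finset.smul_sum, smul_smul]

lemma tailPart_sum (b : HilbertBasis ℕ ℝ H) (i : ℕ) {m : ℕ} (c : ℕ → ℝ) (v : ℕ → H) :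
    tailPart b i (∑ k ∈ Finset.range m, c k • v k)
      = ∑ k ∈ Finset.range m, c k • tailPart b i (v k) := by
  induction m with
  | zero => simp [tailPart]
  | succ m ih =>
      rw [Finset.sum_range_succ, tailPart_add, ih, tailPart_smul, Finset.sum_range_succ]

/-- Key deterministic inequality: the `ψ`-tail of `x` is controlled by the `φ`-tail of `x`
plus the `ψ`-tails of the first basis vectors of `φ`. -/
lemma key_ineq (ψ φb : HilbertBasis ℕ ℝ H) (i j : ℕ) (x : H) :
    ‖tailPart ψ i x‖ ≤
      (∑ k ∈ Finset.range (j + 1), |(inner ℝ x (φb k) : ℝ)| * ‖tailPart ψ i (φb k)‖)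
        + ‖tailPart φb j x‖ := by
  have hx : x = (∑ k ∈ Finset.range (j + 1), (inner ℝ x (φb k) : ℝ) • φb k) + tailPart φb j x := by
    simp [tailPart]
  calc ‖tailPart ψ i x‖
      = ‖tailPart ψ i (∑ k ∈ Finset.range (j + 1), (inner ℝ x (φb k) : ℝ) • φb k)
          + tailPart ψ i (tailPart φb j x)‖ := by rw [← tailPart_add, ← hx]
    _ ≤ ‖tailPart ψ i (∑ k ∈ Finset.range (j + 1), (inner ℝ x (φb k) : ℝ) • φb k)‖
          + ‖tailPart ψ i (tailPart φb j x)‖ := norm_add_le _ _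
    _ ≤ (∑ k ∈ Finset.range (j + 1), |(inner ℝ x (φb k) : ℝ)| * ‖tailPart ψ i (φb k)‖)
          + ‖tailPart φb j x‖ := by
        gcongr
        · rw [tailPart_sum]
          exact (norm_sum_le _ _).trans (le_of_eq (Finset.sum_congr rfl fun k _ => by
            rw [norm_smul, Real.norm_eq_abs]))
        · exact tailPart_norm_le _ _ _

/-- Tightness of a sequence of real random variables converging in distribution. -/
lemma tight {Ω : Type*} [MeasurableSpace Ω] (P : Measure Ω) [IsProbabilityMeasure P]
    (X : ℕ → Ω → ℝ) (hX : ∀ n, Measurable (X n)) (γ : Measure ℝ) [IsProbabilityMeasure γ]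
    (h : ∀ f : BoundedContinuousFunction ℝ ℝ,
      Tendsto (fun n => ∫ a, f (X n a) ∂P) atTop (𝓝 (∫ t, f t ∂γ)))
    {θ : ℝ≥0∞} (hθ : 0 < θ) :
    ∃ M : ℝ, ∀ᶠ n in atTop, P {a | M ≤ |X n a|} ≤ θ := by
  set θ' : ℝ≥0∞ := min θ 1 with hθ'def
  have hθ'pos : 0 < θ' := lt_min hθ (by norm_num)
  have hθ'top : θ' ≠ ⊤ := ne_top_of_le_ne_top (by norm_num) (min_le_right _ _)
  set θr : ℝ := θ'.toReal with hθrdef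
  have hθrpos : 0 < θr := ENNReal.toReal_pos hθ'pos.ne' hθ'top
  -- find a threshold where the Gaussian tail is small
  have hmeasA : ∀ c : ℝ, MeasurableSet {t : ℝ | c ≤ |t|} :=
    fun c => (isClosed_le continuous_const continuous_abs).measurableSet
  have htail : Tendsto (fun m : ℕ => γ {t : ℝ | (m : ℝ) ≤ |t|}) atTop (𝓝 0) := by
    have h0 : (⋂ m : ℕ, {t : ℝ | (m : ℝ) ≤ |t|}) = ∅ := by
      ext t
      simp only [Set.mem_iInter, Set.mem_setOf_eq, Set.mem_empty_iff_false, iff_false, not_forall,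
        not_le]
      obtain ⟨m, hm⟩ := exists_nat_gt |t|
      exact ⟨m, hm⟩
    have := tendsto_measure_iInter_atTop (μ := γ)
      (s := fun m : ℕ => {t : ℝ | (m : ℝ) ≤ |t|})
      (fun m => (hmeasA m).nullMeasurableSet)
      (fun a b hab t ht => le_trans (show (a:ℝ) ≤ (b:ℝ) from Nat.cast_le.mpr hab) ht)
      ⟨0, measure_ne_top _ _⟩
    rw [h0] at this
    simpa [Function.comp_def] using this
  obtain ⟨m, hm⟩ : ∃ m : ℕ, γ {t : ℝ | (m : ℝ) ≤ |t|} < ENNReal.ofReal (θr / 2) := by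
    exact (htail.eventually_lt_const (ENNReal.ofReal_pos.mpr (by linarith))).exists
  -- the bump function
  set g : ℝ → ℝ := fun t => max 0 (min 1 (|t| - m)) with hgdef
  have hgcont : Continuous g := by
    exact continuous_const.max ((continuous_const.min (continuous_abs.sub continuous_const)))
  have hg01 : ∀ t, 0 ≤ g t ∧ g t ≤ 1 := fun t =>
    ⟨le_max_left _ _, max_le (by norm_num) (min_le_left _ _)⟩
  set f0 : BoundedContinuousFunction ℝ ℝ :=
    BoundedContinuousFunction.ofNormedAddCommGroup g hgcont 1
      (fun t => by rw [Real.norm_eq_abs, abs_of_nonneg (hg01 t).1]; exact (hg01 t).2)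
    with hf0def
  have hf0app : ∀ t, f0 t = g t := fun t => rfl
  -- indicator bounds
  have hind1 : ∀ t, (m : ℝ) + 1 ≤ |t| → g t = 1 := by
    intro t ht
    have : (1:ℝ) ≤ |t| - m := by linarith
    simp [hgdef, min_eq_left this, max_eq_right (le_trans zero_le_one this)]
  have hind2 : ∀ t, g t ≠ 0 → (m : ℝ) ≤ |t| := by
    intro t ht
    by_contra hc
    push_neg at hc
    apply ht
    simp only [hgdef, max_eq_left_iff]
    exact min_le_of_right_le (by linarith)
  refine ⟨(m : ℝ) + 1, ?_⟩
  have hint : ∀ n, Integrable (fun a => f0 (X n a)) P := by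
    intro n
    refine Integrable.mono' (integrable_const ‖f0‖)
      ((f0.continuous.measurable.comp (hX n)).aestronglyMeasurable)
      (Filter.Eventually.of_forall fun a => f0.norm_coe_le_norm _)
  have hγint : ∫ t, f0 t ∂γ ≤ θr / 2 := by
    have hle : ∀ t, f0 t ≤ Set.indicator {t : ℝ | (m:ℝ) ≤ |t|} (fun _ => (1:ℝ)) t := by
      intro t
      by_cases ht : g t = 0
      · rw [show f0 t = g t from rfl, ht]; exact Set.indicator_nonneg (fun _ _ => zero_le_one) t
      · rw [Set.indicator_of_mem (show t ∈ {t : ℝ | (m:ℝ) ≤ |t|} from hind2 t ht)]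
        exact (hg01 t).2
    calc ∫ t, f0 t ∂γ
        ≤ ∫ t, Set.indicator {t : ℝ | (m:ℝ) ≤ |t|} (fun _ => (1:ℝ)) t ∂γ := by
          refine integral_mono ?_ ((integrable_const (1:ℝ)).indicator (hmeasA m)) hle
          exact Integrable.mono' (integrable_const ‖f0‖)
            (f0.continuous.measurable.aestronglyMeasurable)
            (Filter.Eventually.of_forall fun t => f0.norm_coe_le_norm _)
      _ = (γ {t : ℝ | (m:ℝ) ≤ |t|}).toReal := by
          rw [integral_indicator_const _ (hmeasA m)]; simp [measureReal_def]
      _ ≤ θr / 2 := by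
          have := ENNReal.toReal_mono (by simp) hm.le
          rwa [ENNReal.toReal_ofReal (by linarith)] at this
  have hev : ∀ᶠ n in atTop, ∫ a, f0 (X n a) ∂P < θr :=
    (h f0).eventually_lt_const (lt_of_le_of_lt hγint (by linarith))
  filter_upwards [hev] with n hn
  have hs : MeasurableSet {a | (m:ℝ) + 1 ≤ |X n a|} :=
    measurableSet_le measurable_const (hX n).abs
  have hPle : (P {a | (m:ℝ) + 1 ≤ |X n a|}).toReal ≤ ∫ a, f0 (X n a) ∂P := by
    have hle : ∀ a, Set.indicator {a | (m:ℝ) + 1 ≤ |X n a|} (fun _ => (1:ℝ)) a ≤ f0 (X n a) := by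
      intro a
      by_cases ha : a ∈ {a | (m:ℝ) + 1 ≤ |X n a|}
      · rw [Set.indicator_of_mem ha, hf0app, hind1 _ ha]
      · rw [Set.indicator_of_notMem ha]; exact (hg01 _).1
    calc (P {a | (m:ℝ) + 1 ≤ |X n a|}).toReal
        = ∫ a, Set.indicator {a | (m:ℝ) + 1 ≤ |X n a|} (fun _ => (1:ℝ)) a ∂P := by
          rw [integral_indicator_const _ hs]; simp [measureReal_def]
      _ ≤ ∫ a, f0 (X n a) ∂P :=
          integral_mono ((integrable_const (1:ℝ)).indicator hs) (hint n) hle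
  calc P {a | (m:ℝ) + 1 ≤ |X n a|}
      = ENNReal.ofReal (P {a | (m:ℝ) + 1 ≤ |X n a|}).toReal :=
        (ENNReal.ofReal_toReal (measure_ne_top _ _)).symm
    _ ≤ ENNReal.ofReal θr := ENNReal.ofReal_le_ofReal (le_trans hPle hn.le)
    _ = θ' := ENNReal.ofReal_toReal hθ'top
    _ ≤ θ := min_le_left _ _
end CondG2Aux

open CondG2Aux in
/-- Let `(S_n)` be a sequence of bounded linear test-statistics on a
separable real Hilbert space `H` satisfying Conditions (G0) (with a continuous symmetric
bilinear form `σ`, the limits being centered Gaussians) and (G1).  If Condition (G2) holds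
for one orthonormal basis `(φ_i)` of `H`, then it holds for every orthonormal basis:
for any orthonormal basis `(ψ_i)` and every `ε > 0`,
`lim_{i→∞} limsup_{n→∞} P(∑_{k>i} S_n(ψ_k)² ≥ ε) = 0`. -/
theorem condG2_of_any_basis
    {Ω : Type*} [MeasurableSpace Ω] (P : Measure Ω) [IsProbabilityMeasure P]
    {H : Type*} [NormedAddCommGroup H] [InnerProductSpace ℝ H]
    [CompleteSpace H] [TopologicalSpace.SeparableSpace H]
    [MeasurableSpace (H →L[ℝ] ℝ)] [BorelSpace (H →L[ℝ] ℝ)]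
    (S : ℕ → Ω → (H →L[ℝ] ℝ)) (hSmeas : ∀ n, Measurable (S n))
    -- Condition (G0):
    (σ : H →L[ℝ] H →L[ℝ] ℝ) (hσsymm : ∀ v w : H, σ v w = σ w v)
    (hG0 : ∀ (m : ℕ) (ω : Fin m → H),
      0 ≤ ∑ i, ∑ j, σ (ω i) (ω j) ∧
      ∀ f : BoundedContinuousFunction ℝ ℝ,
        Tendsto (fun n => ∫ a, f (S n a (∑ i, ω i)) ∂P) atTop
          (𝓝 (∫ t, f t ∂gaussianReal 0 (∑ i, ∑ j, σ (ω i) (ω j)).toNNReal)))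
    -- Condition (G1):
    (hG1 : ∃ b : HilbertBasis ℕ ℝ H, Summable fun i => σ (b i) (b i))
    -- Condition (G2) for one orthonormal basis `φ`:
    (φ : HilbertBasis ℕ ℝ H)
    (hG2 : ∀ ε > (0 : ℝ),
      Tendsto
        (fun i => Filter.limsup
          (fun n => P {a | ε ≤ ∑' k : ℕ, (S n a (φ (i + 1 + k))) ^ 2}) atTop)
        atTop (𝓝 (0 : ℝ≥0∞))) :
    ∀ ψ : HilbertBasis ℕ ℝ H, ∀ ε > (0 : ℝ),
      Tendsto
        (fun i => Filter.limsup
          (fun n => P {a | ε ≤ ∑' k : ℕ, (S n a (ψ (i + 1 + k))) ^ 2}) atTop)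
        atTop (𝓝 (0 : ℝ≥0∞)) := by
  classical
  intro ψ ε hε
  -- Riesz representatives
  set R : ℕ → Ω → H := fun n a => (InnerProductSpace.toDual ℝ H).symm (S n a) with hR
  have hSR : ∀ n a (v : H), S n a v = (inner ℝ (R n a) v : ℝ) := by
    intro n a v
    rw [hR, ← InnerProductSpace.toDual_apply_apply, LinearIsometryEquiv.apply_symm_apply]
  have htail : ∀ (b : HilbertBasis ℕ ℝ H) (i : ℕ) (n : ℕ) (a : Ω),
      ∑' k : ℕ, (S n a (b (i + 1 + k))) ^ 2 = ‖tailPart b i (R n a)‖ ^ 2 := by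
    intro b i n a
    rw [← tail_tsum_eq b i (R n a)]
    exact tsum_congr fun k => by rw [hSR]
  have hmeasEval : ∀ (n : ℕ) (v : H), Measurable fun a => S n a v := fun n v =>
    (ContinuousLinearMap.apply ℝ ℝ v).continuous.measurable.comp (hSmeas n)
  have hconv : ∀ v : H, ∀ f : BoundedContinuousFunction ℝ ℝ,
      Tendsto (fun n => ∫ a, f (S n a v) ∂P) atTop
        (𝓝 (∫ t, f t ∂gaussianReal 0 (σ v v).toNNReal)) := by
    intro v f
    have h := (hG0 1 ![v]).2 f
    simpa [Fin.sum_univ_one] using h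
  rw [ENNReal.tendsto_atTop_zero]
  intro η hη
  set η' : ℝ≥0∞ := min η 1 with hη'def
  have hη'pos : 0 < η' := lt_min hη (by norm_num)
  have hη'top : η' ≠ ⊤ := ne_top_of_le_ne_top (by norm_num) (min_le_right _ _)
  -- Step 1: choose J from hG2
  obtain ⟨J, hJ⟩ := ENNReal.tendsto_atTop_zero.mp (hG2 (ε / 4) (by linarith)) (η' / 4)
    (ENNReal.div_pos hη'pos.ne' (by norm_num))
  have hJlim : Filter.limsup
      (fun n => P {a | ε / 4 ≤ ∑' k : ℕ, (S n a (φ (J + 1 + k))) ^ 2}) atTop ≤ η' / 4 :=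
    hJ J le_rfl
  have h44 : η' / 4 < η' / 2 := by
    rw [div_eq_mul_inv, div_eq_mul_inv]
    refine ENNReal.mul_lt_mul_right hη'pos.ne' hη'top ?_
    rw [ENNReal.inv_lt_inv]
    norm_num
  have hevTail : ∀ᶠ n in atTop,
      P {a | ε / 4 ≤ ∑' k : ℕ, (S n a (φ (J + 1 + k))) ^ 2} < η' / 2 :=
    Filter.eventually_lt_of_limsup_lt (lt_of_le_of_lt hJlim h44)
  -- Step 2: tightness constants
  set c : ℝ≥0∞ := (J : ℝ≥0∞) + 1 with hcdef
  have hcne : c ≠ ⊤ := by simp [hcdef]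
  have hθpos : 0 < η' / 2 / c :=
    ENNReal.div_pos (ENNReal.div_pos hη'pos.ne' (by norm_num)).ne' hcne
  have hM : ∀ k : ℕ, ∃ M : ℝ, ∀ᶠ n in atTop,
      P {a | M ≤ |S n a (φ k)|} ≤ η' / 2 / c := fun k =>
    CondG2Aux.tight P (fun n a => S n a (φ k)) (fun n => hmeasEval n _) _
      (hconv (φ k)) hθpos
  choose M hMev using hM
  -- Step 3: the ψ-tails of the first φ-vectors tend to 0
  have hnormtail : ∀ k : ℕ,
      Tendsto (fun i => ‖tailPart ψ i (φ k)‖) atTop (𝓝 0) := by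
    intro k
    have hsq : Tendsto (fun i => ‖tailPart ψ i (φ k)‖ ^ 2) atTop (𝓝 0) := by
      have hps := (parseval ψ (φ k)).tendsto_sum_nat
      have hps' : Tendsto (fun i : ℕ => ∑ l ∈ Finset.range (i + 1),
          (inner ℝ (φ k) (ψ l) : ℝ) ^ 2) atTop (𝓝 (‖(φ k : H)‖ ^ 2)) :=
        hps.comp (tendsto_add_atTop_nat 1)
      have heq : ∀ i, ‖tailPart ψ i (φ k)‖ ^ 2
          = ‖(φ k : H)‖ ^ 2 - ∑ l ∈ Finset.range (i + 1), (inner ℝ (φ k) (ψ l) : ℝ) ^ 2 := by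
        intro i; have := norm_sq_split ψ i (φ k); linarith
      simp only [heq]
      have := (tendsto_const_nhds (x := ‖(φ k : H)‖ ^ 2) (f := atTop (α := ℕ))).sub hps'
      simpa using this
    have := (Real.continuous_sqrt.tendsto 0).comp hsq
    simpa [Real.sqrt_sq (norm_nonneg _), Function.comp_def, Real.sqrt_zero] using this
  have hsumtend : Tendsto (fun i => ∑ k ∈ Finset.range (J + 1),
      M k * ‖tailPart ψ i (φ k)‖) atTop (𝓝 0) := by
    have := tendsto_finset_sum (Finset.range (J + 1))
      (fun k _ => (hnormtail k).const_mul (M k))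
    simpa using this
  have hsqrt : 0 < Real.sqrt ε / 2 := by positivity
  obtain ⟨I, hI⟩ := Filter.eventually_atTop.mp (hsumtend.eventually_lt_const hsqrt)
  refine ⟨I, fun i hi => ?_⟩
  refine le_trans ?_ (min_le_left η 1)
  refine Filter.limsup_le_of_le (by isBoundedDefault) ?_
  have hall : ∀ᶠ n in atTop, ∀ k ∈ Finset.range (J + 1),
      P {a | M k ≤ |S n a (φ k)|} ≤ η' / 2 / c :=
    (Filter.eventually_all_finset _).mpr fun k _ => hMev k
  filter_upwards [hevTail, hall] with n hn1 hn2
  -- the inclusion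
  have hsubset : {a | ε ≤ ∑' k : ℕ, (S n a (ψ (i + 1 + k))) ^ 2} ⊆
      {a | ε / 4 ≤ ∑' k : ℕ, (S n a (φ (J + 1 + k))) ^ 2} ∪
        ⋃ k ∈ Finset.range (J + 1), {a | M k ≤ |S n a (φ k)|} := by
    intro a ha
    by_contra hcon
    simp only [Set.mem_union, Set.mem_iUnion, Set.mem_setOf_eq, not_or, not_exists,
      not_le, exists_prop] at hcon
    obtain ⟨hc1, hc2⟩ := hcon
    have hc2' : ∀ k ∈ Finset.range (J + 1), |S n a (φ k)| < M k := fun k hk =>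
      not_le.mp fun h => hc2 k ⟨hk, h⟩
    rw [htail φ J n a] at hc1
    have hc1' : ‖tailPart φ J (R n a)‖ < Real.sqrt ε / 2 := by
      nlinarith [norm_nonneg (tailPart φ J (R n a)), Real.sq_sqrt hε.le, Real.sqrt_nonneg ε]
    have hkey := key_ineq ψ φ i J (R n a)
    have hsum_le : ∑ k ∈ Finset.range (J + 1), |(inner ℝ (R n a) (φ k) : ℝ)| * ‖tailPart ψ i (φ k)‖
        ≤ ∑ k ∈ Finset.range (J + 1), M k * ‖tailPart ψ i (φ k)‖ := by
      refine Finset.sum_le_sum fun k hk => ?_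
      refine mul_le_mul_of_nonneg_right ?_ (norm_nonneg _)
      rw [← hSR n a (φ k)]
      exact (hc2' k hk).le
    have hnorm_lt : ‖tailPart ψ i (R n a)‖ < Real.sqrt ε := by
      have h1 := hI i hi
      calc ‖tailPart ψ i (R n a)‖ ≤ _ := hkey
        _ < Real.sqrt ε / 2 + Real.sqrt ε / 2 := by
            exact add_lt_add_of_le_of_lt (le_trans hsum_le h1.le) hc1' |>.trans_le (le_refl _)
        _ = Real.sqrt ε := by ring
    have : ∑' k : ℕ, (S n a (ψ (i + 1 + k))) ^ 2 < ε := by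
      rw [htail ψ i n a]
      nlinarith [norm_nonneg (tailPart ψ i (R n a)), Real.sq_sqrt hε.le]
    rw [Set.mem_setOf_eq] at ha
    linarith
  calc P {a | ε ≤ ∑' k : ℕ, (S n a (ψ (i + 1 + k))) ^ 2}
      ≤ P ({a | ε / 4 ≤ ∑' k : ℕ, (S n a (φ (J + 1 + k))) ^ 2} ∪
          ⋃ k ∈ Finset.range (J + 1), {a | M k ≤ |S n a (φ k)|}) := measure_mono hsubset
    _ ≤ P {a | ε / 4 ≤ ∑' k : ℕ, (S n a (φ (J + 1 + k))) ^ 2} +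
          P (⋃ k ∈ Finset.range (J + 1), {a | M k ≤ |S n a (φ k)|}) := measure_union_le _ _
    _ ≤ η' / 2 + ∑ k ∈ Finset.range (J + 1), P {a | M k ≤ |S n a (φ k)|} :=
        add_le_add hn1.le (measure_biUnion_finset_le _ _)
    _ ≤ η' / 2 + ∑ k ∈ Finset.range (J + 1), η' / 2 / c :=
        add_le_add le_rfl (Finset.sum_le_sum fun k hk => hn2 k hk)
    _ ≤ η' / 2 + η' / 2 := by
        refine add_le_add le_rfl ?_
        rw [Finset.sum_const, Finset.card_range, nsmul_eq_mul]
        have : ((J + 1 : ℕ) : ℝ≥0∞) = c := by push_cast [hcdef]; ring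
        rw [this]
        exact ENNReal.mul_div_le
    _ = η' := ENNReal.add_halves _
end

section
/- Assume the two-sample MMD setting with Condition 1 (F_0 and F_1 arbitrary). Define c(ω) = ∫ ω dF_0 − ∫ ω dF_1 and c* = sup_{ω∈H, ‖ω‖=1} c(ω). Then c* < ∞ and (1/n) Ψ_n = (1/n) sup_{ω∈H, ‖ω‖=1} S_n(ω)² converges almost surely to (c*)² as n → ∞. -/
open MeasureTheory ProbabilityTheory Filter Topology
open scoped ENNReal NNReal InnerProductSpace

/-- Pettis-type measurability: a weakly measurable map into a separable Hilbert space is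
measurable. -/
theorem mmd_aux_measurable_of_inner {𝓧 H : Type*} [MeasurableSpace 𝓧] [NormedAddCommGroup H]
    [InnerProductSpace ℝ H] [TopologicalSpace.SeparableSpace H]
    [MeasurableSpace H] [BorelSpace H]
    (k : 𝓧 → H) (hkmeas : ∀ ω : H, Measurable fun x => ⟪k x, ω⟫_ℝ) :
    Measurable k := by
  have hne : Nonempty H := ⟨0⟩
  set u : ℕ → H := TopologicalSpace.denseSeq H with hu
  have hdense : DenseRange u := TopologicalSpace.denseRange_denseSeq H
  haveI : SecondCountableTopology H := UniformSpace.secondCountable_of_separable H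
  set U : ℕ → Submodule ℝ H := fun m =>
    Submodule.span ℝ (Set.range (fun i : Fin (m + 1) => u i)) with hU
  have hUfin : ∀ m, FiniteDimensional ℝ (U m) := fun m =>
    FiniteDimensional.span_of_finite ℝ (Set.finite_range _)
  have hUcomp : ∀ m, CompleteSpace (U m) := fun m => by
    haveI := hUfin m; exact FiniteDimensional.complete ℝ _
  haveI := fun m => hUcomp m
  set f : ℕ → 𝓧 → H := fun m x => ((U m).orthogonalProjectionOnto (k x) : H) with hf
  have hfmeas : ∀ m, Measurable (f m) := by
    intro m
    haveI := hUfin m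
    let b := stdOrthonormalBasis ℝ (U m)
    have hfeq : f m = fun x => ∑ i, ⟪((b i : U m) : H), k x⟫_ℝ • ((b i : U m) : H) := by
      funext x
      have := b.orthogonalProjectionOnto_apply_eq_sum (k x)
      calc f m x = (((U m).orthogonalProjectionOnto (k x) : U m) : H) := rfl
        _ = ((∑ i, ⟪((b i : U m) : H), k x⟫_ℝ • b i : U m) : H) := by rw [this]
        _ = ∑ i, ⟪((b i : U m) : H), k x⟫_ℝ • ((b i : U m) : H) := by
            simp
    rw [hfeq]
    refine Finset.measurable_sum _ fun i _ => Measurable.smul_const ?_ _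
    simpa [real_inner_comm] using hkmeas (b i : U m)
  refine measurable_of_tendsto_metrizable hfmeas ?_
  rw [tendsto_pi_nhds]
  intro x
  rw [Metric.tendsto_atTop]
  intro ε hε
  obtain ⟨j, hj⟩ := hdense.exists_dist_lt (k x) hε
  refine ⟨j, fun m hm => ?_⟩
  have hmem : u j ∈ U m := Submodule.subset_span ⟨⟨j, by omega⟩, rfl⟩
  have hbdd : BddBelow (Set.range fun y : U m => ‖k x - y‖) :=
    ⟨0, by rintro _ ⟨y, rfl⟩; exact norm_nonneg _⟩
  have h1 : ‖k x - f m x‖ ≤ ‖k x - u j‖ := by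
    rw [show f m x = (U m).starProjection (k x) from rfl,
      Submodule.starProjection_minimal]
    exact ciInf_le hbdd (⟨u j, hmem⟩ : U m)
  calc dist (f m x) (k x) = ‖k x - f m x‖ := by rw [dist_eq_norm, norm_sub_rev]
    _ ≤ ‖k x - u j‖ := h1
    _ = dist (k x) (u j) := (dist_eq_norm _ _).symm
    _ < ε := hj

/-- Supremum of a linear functional over the unit sphere equals the norm. -/
theorem mmd_aux_iSup_inner {H : Type*} [NormedAddCommGroup H] [InnerProductSpace ℝ H]
    [Nontrivial H] (v : H) :
    ⨆ ω : {ω : H // ‖ω‖ = 1}, ⟪v, ω.1⟫_ℝ = ‖v‖ := by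
  obtain ⟨e, he⟩ := exists_norm_eq H (zero_le_one (α := ℝ))
  haveI : Nonempty {ω : H // ‖ω‖ = 1} := ⟨⟨e, he⟩⟩
  have hub : ∀ ω : {ω : H // ‖ω‖ = 1}, ⟪v, ω.1⟫_ℝ ≤ ‖v‖ := fun ω => by
    simpa [ω.2] using real_inner_le_norm v ω.1
  refine le_antisymm (ciSup_le hub) ?_
  by_cases hv : v = 0
  · refine le_trans ?_ (le_ciSup_of_le ⟨‖v‖, by rintro _ ⟨ω, rfl⟩; exact hub ω⟩
      (⟨e, he⟩ : {ω : H // ‖ω‖ = 1}) le_rfl)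
    simp [hv]
  · have hvn : ‖v‖ ≠ 0 := norm_ne_zero_iff.2 hv
    have hω : ‖‖v‖⁻¹ • v‖ = 1 := by
      rw [norm_smul, norm_inv, norm_norm, inv_mul_cancel₀ hvn]
    refine le_ciSup_of_le ⟨‖v‖, by rintro _ ⟨ω, rfl⟩; exact hub ω⟩
      (⟨‖v‖⁻¹ • v, hω⟩ : {ω : H // ‖ω‖ = 1}) ?_
    rw [real_inner_smul_right, real_inner_self_eq_norm_sq, sq, inv_mul_cancel_left₀ hvn]

/-- Supremum of squared inner products over the unit sphere equals the squared norm. -/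
theorem mmd_aux_iSup_inner_sq {H : Type*} [NormedAddCommGroup H] [InnerProductSpace ℝ H]
    [Nontrivial H] (v : H) :
    ⨆ ω : {ω : H // ‖ω‖ = 1}, ⟪v, ω.1⟫_ℝ ^ 2 = ‖v‖ ^ 2 := by
  obtain ⟨e, he⟩ := exists_norm_eq H (zero_le_one (α := ℝ))
  haveI : Nonempty {ω : H // ‖ω‖ = 1} := ⟨⟨e, he⟩⟩
  have hub : ∀ ω : {ω : H // ‖ω‖ = 1}, ⟪v, ω.1⟫_ℝ ^ 2 ≤ ‖v‖ ^ 2 := fun ω => by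
    have h := abs_real_inner_le_norm v ω.1
    rw [ω.2, mul_one] at h
    calc ⟪v, ω.1⟫_ℝ ^ 2 = |⟪v, ω.1⟫_ℝ| ^ 2 := (sq_abs _).symm
      _ ≤ ‖v‖ ^ 2 := by
          have : (0:ℝ) ≤ |⟪v, ω.1⟫_ℝ| := abs_nonneg _
          nlinarith
  refine le_antisymm (ciSup_le hub) ?_
  by_cases hv : v = 0
  · refine le_trans ?_ (le_ciSup_of_le ⟨‖v‖ ^ 2, by rintro _ ⟨ω, rfl⟩; exact hub ω⟩
      (⟨e, he⟩ : {ω : H // ‖ω‖ = 1}) le_rfl)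
    simp [hv]
  · have hvn : ‖v‖ ≠ 0 := norm_ne_zero_iff.2 hv
    have hω : ‖‖v‖⁻¹ • v‖ = 1 := by
      rw [norm_smul, norm_inv, norm_norm, inv_mul_cancel₀ hvn]
    refine le_ciSup_of_le ⟨‖v‖ ^ 2, by rintro _ ⟨ω, rfl⟩; exact hub ω⟩
      (⟨‖v‖⁻¹ • v, hω⟩ : {ω : H // ‖ω‖ = 1}) ?_
    rw [real_inner_smul_right, real_inner_self_eq_norm_sq,
      show ‖v‖⁻¹ * ‖v‖ ^ 2 = ‖v‖ by rw [sq, inv_mul_cancel_left₀ hvn]]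

/-- **MMD under the alternative.** In the two-sample MMD setting with bounded
kernel and non-vanishing groups (`F₀`, `F₁` arbitrary), let
`c(ω) = ∫ ω dF₀ − ∫ ω dF₁` and `c* = sup_{‖ω‖=1} c(ω)`.  Then `c* < ∞` (the set of values
is bounded above) and `(1/n) Ψₙ = (1/n) sup_{‖ω‖=1} Sₙ(ω)²` converges almost surely
to `(c*)²`. -/
theorem mmd_psi_div_n_tendsto_cstar_sq_ae
    {𝓧 : Type*} [MeasurableSpace 𝓧]
    {H : Type*} [NormedAddCommGroup H] [InnerProductSpace ℝ H]
    [CompleteSpace H] [TopologicalSpace.SeparableSpace H]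
    (k : 𝓧 → H) (hkmeas : ∀ ω : H, Measurable fun x => ⟪k x, ω⟫_ℝ)
    (C : ℝ) (hC : 0 < C) (hK : ∀ x y, |⟪k x, k y⟫_ℝ| ≤ C)
    {Ω : Type*} [MeasurableSpace Ω] (P : Measure Ω) [IsProbabilityMeasure P]
    (F0 F1 : Measure 𝓧) [IsProbabilityMeasure F0] [IsProbabilityMeasure F1]
    (X Y : ℕ → Ω → 𝓧)
    (hXmeas : ∀ i, Measurable (X i)) (hYmeas : ∀ i, Measurable (Y i))
    (hindep : iIndepFun (Sum.elim X Y) P)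
    (hX : ∀ i, Measure.map (X i) P = F0) (hY : ∀ i, Measure.map (Y i) P = F1)
    (n₀ n₁ : ℕ → ℕ) (hn : ∀ n, n₀ n + n₁ n = n)
    (ρ0 ρ1 : ℝ) (hρ0 : ρ0 ∈ Set.Ioo (0 : ℝ) 1) (hρ1 : ρ1 ∈ Set.Ioo (0 : ℝ) 1)
    (hrat0 : Tendsto (fun n => (n₀ n : ℝ) / n) atTop (𝓝 ρ0))
    (hrat1 : Tendsto (fun n => (n₁ n : ℝ) / n) atTop (𝓝 ρ1))
    -- the linear test-statistic `Sₙ(ω)`: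
    (S : ℕ → Ω → H → ℝ)
    (hS : ∀ n a ω, S n a ω = Real.sqrt n *
      ((n₀ n : ℝ)⁻¹ * ∑ i ∈ Finset.range (n₀ n), ⟪k (X i a), ω⟫_ℝ
        - (n₁ n : ℝ)⁻¹ * ∑ j ∈ Finset.range (n₁ n), ⟪k (Y j a), ω⟫_ℝ))
    -- `c(ω) = ∫ ω dF₀ − ∫ ω dF₁`:
    (c : H → ℝ)
    (hc : ∀ ω, c ω = (∫ x, ⟪k x, ω⟫_ℝ ∂F0) - ∫ x, ⟪k x, ω⟫_ℝ ∂F1) :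
    -- `c* < ∞`:
    BddAbove (Set.range fun ω : {ω : H // ‖ω‖ = 1} => c ω.1) ∧
    -- `(1/n) Ψₙ → (c*)²` almost surely:
    (∀ᵐ a ∂P,
      Tendsto
        (fun n : ℕ => (n : ℝ)⁻¹ * ⨆ ω : {ω : H // ‖ω‖ = 1}, (S n a ω.1) ^ 2)
        atTop (𝓝 ((⨆ ω : {ω : H // ‖ω‖ = 1}, c ω.1) ^ 2))) := by
  rcases subsingleton_or_nontrivial H with hH | hH
  · -- trivial case: the unit sphere is empty
    haveI : IsEmpty {ω : H // ‖ω‖ = 1} := by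
      refine ⟨fun ω => ?_⟩
      have h0 : ω.1 = 0 := Subsingleton.elim _ _
      have := ω.2
      rw [h0, norm_zero] at this
      exact one_ne_zero this.symm
    constructor
    · rw [Set.range_eq_empty]
      exact bddAbove_empty
    · refine ae_of_all _ fun a => ?_
      simp only [Real.iSup_of_isEmpty, mul_zero]
      simpa using tendsto_const_nhds
  · -- main case
    borelize H
    have hkM : Measurable k := mmd_aux_measurable_of_inner k hkmeas
    -- norm bound on k
    have hkb : ∀ x, ‖k x‖ ≤ Real.sqrt C := by
      intro x
      have h2 : ‖k x‖ ^ 2 ≤ C :=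
        calc ‖k x‖ ^ 2 = ⟪k x, k x⟫_ℝ := (real_inner_self_eq_norm_sq _).symm
          _ ≤ |⟪k x, k x⟫_ℝ| := le_abs_self _
          _ ≤ C := hK x x
      calc ‖k x‖ = Real.sqrt (‖k x‖ ^ 2) := (Real.sqrt_sq (norm_nonneg _)).symm
        _ ≤ Real.sqrt C := Real.sqrt_le_sqrt h2
    -- mean embeddings
    set μ0 : H := ∫ x, k x ∂F0 with hμ0
    set μ1 : H := ∫ x, k x ∂F1 with hμ1
    have hint0 : Integrable k F0 :=
      (integrable_const (Real.sqrt C)).mono' hkM.aestronglyMeasurable (ae_of_all _ hkb)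
    have hint1 : Integrable k F1 :=
      (integrable_const (Real.sqrt C)).mono' hkM.aestronglyMeasurable (ae_of_all _ hkb)
    -- c is a linear functional
    have hcinner : ∀ ω : H, c ω = ⟪μ0 - μ1, ω⟫_ℝ := by
      intro ω
      rw [hc, inner_sub_left]
      congr 1
      · calc (∫ x, ⟪k x, ω⟫_ℝ ∂F0) = ∫ x, ⟪ω, k x⟫_ℝ ∂F0 := by
              simp_rw [real_inner_comm]
          _ = ⟪ω, μ0⟫_ℝ := integral_inner hint0 ω
          _ = ⟪μ0, ω⟫_ℝ := real_inner_comm _ _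
      · calc (∫ x, ⟪k x, ω⟫_ℝ ∂F1) = ∫ x, ⟪ω, k x⟫_ℝ ∂F1 := by
              simp_rw [real_inner_comm]
          _ = ⟪ω, μ1⟫_ℝ := integral_inner hint1 ω
          _ = ⟪μ1, ω⟫_ℝ := real_inner_comm _ _
    have hub : ∀ ω : {ω : H // ‖ω‖ = 1}, c ω.1 ≤ ‖μ0 - μ1‖ := fun ω => by
      rw [hcinner]
      simpa [ω.2] using real_inner_le_norm (μ0 - μ1) ω.1
    have hbdd : BddAbove (Set.range fun ω : {ω : H // ‖ω‖ = 1} => c ω.1) :=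
      ⟨‖μ0 - μ1‖, by rintro _ ⟨ω, rfl⟩; exact hub ω⟩
    refine ⟨hbdd, ?_⟩
    -- value of the sup of c
    have hcsup : (⨆ ω : {ω : H // ‖ω‖ = 1}, c ω.1) = ‖μ0 - μ1‖ := by
      have := mmd_aux_iSup_inner (μ0 - μ1)
      rw [← this]
      exact iSup_congr fun ω => hcinner ω.1
    -- strong law for the X-samples
    have hXint : Integrable (fun a => k (X 0 a)) P :=
      (integrable_const (Real.sqrt C)).mono'
        (hkM.comp (hXmeas 0)).aestronglyMeasurable (ae_of_all _ fun a => hkb _)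
    have hXindep : Pairwise (Function.onFun (IndepFun · · P) fun i a => k (X i a)) := by
      intro i j hij
      have h := hindep.indepFun (show (Sum.inl i : ℕ ⊕ ℕ) ≠ Sum.inl j by simpa using hij)
      exact h.comp hkM hkM
    have hXident : ∀ i, IdentDistrib (fun a => k (X i a)) (fun a => k (X 0 a)) P P := by
      intro i
      have h : IdentDistrib (X i) (X 0) P P :=
        ⟨(hXmeas i).aemeasurable, (hXmeas 0).aemeasurable, by rw [hX i, hX 0]⟩
      exact h.comp hkM
    have hXlaw := strong_law_ae (fun i a => k (X i a)) hXint hXindep hXident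
    have hEX : (∫ a, k (X 0 a) ∂P) = μ0 := by
      rw [hμ0, ← hX 0, integral_map (hXmeas 0).aemeasurable hkM.aestronglyMeasurable]
    rw [hEX] at hXlaw
    -- strong law for the Y-samples
    have hYint : Integrable (fun a => k (Y 0 a)) P :=
      (integrable_const (Real.sqrt C)).mono'
        (hkM.comp (hYmeas 0)).aestronglyMeasurable (ae_of_all _ fun a => hkb _)
    have hYindep : Pairwise (Function.onFun (IndepFun · · P) fun i a => k (Y i a)) := by
      intro i j hij
      have h := hindep.indepFun (show (Sum.inr i : ℕ ⊕ ℕ) ≠ Sum.inr j by simpa using hij)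
      exact h.comp hkM hkM
    have hYident : ∀ i, IdentDistrib (fun a => k (Y i a)) (fun a => k (Y 0 a)) P P := by
      intro i
      have h : IdentDistrib (Y i) (Y 0) P P :=
        ⟨(hYmeas i).aemeasurable, (hYmeas 0).aemeasurable, by rw [hY i, hY 0]⟩
      exact h.comp hkM
    have hYlaw := strong_law_ae (fun i a => k (Y i a)) hYint hYindep hYident
    have hEY : (∫ a, k (Y 0 a) ∂P) = μ1 := by
      rw [hμ1, ← hY 0, integral_map (hYmeas 0).aemeasurable hkM.aestronglyMeasurable]
    rw [hEY] at hYlaw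
    -- divergence of the group sizes
    have hn0top : Tendsto n₀ atTop atTop := by
      rw [← tendsto_natCast_atTop_iff (R := ℝ)]
      have h1 : Tendsto (fun n : ℕ => ((n₀ n : ℝ) / n) * n) atTop atTop :=
        Tendsto.pos_mul_atTop hρ0.1 hrat0 tendsto_natCast_atTop_atTop
      refine h1.congr' ?_
      filter_upwards [eventually_ne_atTop 0] with n hn'
      field_simp
    have hn1top : Tendsto n₁ atTop atTop := by
      rw [← tendsto_natCast_atTop_iff (R := ℝ)]
      have h1 : Tendsto (fun n : ℕ => ((n₁ n : ℝ) / n) * n) atTop atTop :=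
        Tendsto.pos_mul_atTop hρ1.1 hrat1 tendsto_natCast_atTop_atTop
      refine h1.congr' ?_
      filter_upwards [eventually_ne_atTop 0] with n hn'
      field_simp
    -- conclusion
    filter_upwards [hXlaw, hYlaw] with a hA hB
    set v : ℕ → H := fun n =>
      (n₀ n : ℝ)⁻¹ • (∑ i ∈ Finset.range (n₀ n), k (X i a))
        - (n₁ n : ℝ)⁻¹ • (∑ j ∈ Finset.range (n₁ n), k (Y j a)) with hv
    have hvt : Tendsto v atTop (𝓝 (μ0 - μ1)) := by
      have h0 : Tendsto (fun n => (n₀ n : ℝ)⁻¹ • ∑ i ∈ Finset.range (n₀ n), k (X i a))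
          atTop (𝓝 μ0) := hA.comp hn0top
      have h1 : Tendsto (fun n => (n₁ n : ℝ)⁻¹ • ∑ j ∈ Finset.range (n₁ n), k (Y j a))
          atTop (𝓝 μ1) := hB.comp hn1top
      exact h0.sub h1
    have hnorm : Tendsto (fun n => ‖v n‖ ^ 2) atTop (𝓝 (‖μ0 - μ1‖ ^ 2)) :=
      (hvt.norm).pow 2
    rw [hcsup]
    refine hnorm.congr' ?_
    filter_upwards [eventually_ne_atTop 0] with n hn'
    -- identify the normalized sup with the squared norm
    have hSv : ∀ ω : H, S n a ω = Real.sqrt n * ⟪v n, ω⟫_ℝ := by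
      intro ω
      rw [hS]
      congr 1
      rw [hv]
      simp [inner_sub_left, real_inner_smul_left, sum_inner]
    have hsq : ∀ ω : {ω : H // ‖ω‖ = 1},
        (S n a ω.1) ^ 2 = (n : ℝ) * ⟪v n, ω.1⟫_ℝ ^ 2 := by
      intro ω
      rw [hSv, mul_pow, Real.sq_sqrt (Nat.cast_nonneg n)]
    calc ‖v n‖ ^ 2 = (n : ℝ)⁻¹ * ((n : ℝ) * ‖v n‖ ^ 2) := by
          field_simp
      _ = (n : ℝ)⁻¹ * ((n : ℝ) * ⨆ ω : {ω : H // ‖ω‖ = 1}, ⟪v n, ω.1⟫_ℝ ^ 2) := by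
          rw [mmd_aux_iSup_inner_sq (v n)]
      _ = (n : ℝ)⁻¹ * ⨆ ω : {ω : H // ‖ω‖ = 1}, (n : ℝ) * ⟪v n, ω.1⟫_ℝ ^ 2 := by
          rw [Real.mul_iSup_of_nonneg (Nat.cast_nonneg n)]
      _ = (n : ℝ)⁻¹ * ⨆ ω : {ω : H // ‖ω‖ = 1}, (S n a ω.1) ^ 2 := by
          congr 1
          exact (iSup_congr hsq).symm
end
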